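/- arXiv:1903.11938 — 6 statements merged into one kernel-verified Lean document; each statement's English description precedes it below -/
import Mathlib

section
/- Consider ℤ² with the supremum metric d_∞ and the measure μ with μ(n,m) = 4^{|m|} if n = 0 and μ(n,m) = 1 otherwise. Let f(n,m) = 2^n if n > 0 and m = 0, and f(n,m) = 0 otherwise. Then the non-centered maximal function satisfies Mf(−1,0) < ∞. Consequently, the non-centered maximal operator M associated with this space does not possess the dichotomy property. -/
open MeasureTheory Metric Filter Set ENNReal

/-- The centered Hardy–Littlewood maximal function of `f` at `x`,
with respect to the measure `μ`. -/
noncomputable def centeredMaximal {X : Type*} [MeasurableSpace X] [PseudoMetricSpace X]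
    (μ : Measure X) (f : X → ℝ) (x : X) : ℝ≥0∞ :=
  ⨆ (r : ℝ) (_ : 0 < r),
    (∫⁻ y in Metric.ball x r, ENNReal.ofReal |f y| ∂μ) / μ (Metric.ball x r)

/-- The non-centered Hardy–Littlewood maximal function of `f` at `x`:
the supremum is taken over all open balls containing `x`. -/
noncomputable def noncenteredMaximal {X : Type*} [MeasurableSpace X] [PseudoMetricSpace X]
    (μ : Measure X) (f : X → ℝ) (x : X) : ℝ≥0∞ :=
  ⨆ (c : X) (r : ℝ) (_ : 0 < r) (_ : x ∈ Metric.ball c r),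
    (∫⁻ y in Metric.ball c r, ENNReal.ofReal |f y| ∂μ) / μ (Metric.ball c r)

/-- `f ∈ L¹_loc(μ)`: `∫_B |f| dμ < ∞` for every open ball `B`. -/
def LocallyIntegrableBall {X : Type*} [MeasurableSpace X] [PseudoMetricSpace X]
    (μ : Measure X) (f : X → ℝ) : Prop :=
  ∀ (c : X) (r : ℝ), 0 < r → (∫⁻ y in Metric.ball c r, ENNReal.ofReal |f y| ∂μ) < ⊤

namespace NCM13

noncomputable def w : ℤ × ℤ → ℝ≥0∞ := fun p => if p.1 = 0 then (4 : ℝ≥0∞) ^ p.2.natAbs else 1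

noncomputable def G : ℤ × ℤ → ℝ≥0∞ := fun p => if 0 < p.1 ∧ p.2 = 0 then (2 : ℝ≥0∞) ^ p.1.toNat else 0

noncomputable def μ0 : Measure (ℤ × ℤ) := Measure.count.withDensity w

lemma mem_ball_iff (p c : ℤ × ℤ) (r : ℝ) :
    p ∈ ball c r ↔ |(p.1 : ℝ) - c.1| < r ∧ |(p.2 : ℝ) - c.2| < r := by
  rw [mem_ball, Prod.dist_eq, Int.dist_eq, Int.dist_eq, max_lt_iff]

lemma integral_eq (F : ℤ × ℤ → ℝ≥0∞) (s : Set (ℤ × ℤ)) :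
    ∫⁻ y in s, F y ∂μ0 = ∑' y, s.indicator (fun y => F y * w y) y := by
  have hs : MeasurableSet s := s.to_countable.measurableSet
  rw [μ0, MeasureTheory.restrict_withDensity hs,
    lintegral_withDensity_eq_lintegral_mul _ (measurable_of_countable w) (measurable_of_countable F),
    ← lintegral_indicator hs, lintegral_count]
  exact tsum_congr fun y => by by_cases h : y ∈ s <;> simp [Set.indicator, h, mul_comm]

lemma mu_eq (s : Set (ℤ × ℤ)) : μ0 s = ∑' y, s.indicator w y := by
  have hs : MeasurableSet s := s.to_countable.measurableSet
  rw [μ0, withDensity_apply _ hs, ← lintegral_indicator hs, lintegral_count]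

lemma mu_ge_point {s : Set (ℤ × ℤ)} {p : ℤ × ℤ} (hp : p ∈ s) : w p ≤ μ0 s := by
  rw [mu_eq]
  have := ENNReal.le_tsum (f := fun y => s.indicator w y) p
  rwa [Set.indicator_of_mem hp] at this

lemma F_eq (f : ℤ × ℤ → ℝ)
    (hf : f = fun p : ℤ × ℤ => if 0 < p.1 ∧ p.2 = 0 then (2 : ℝ) ^ p.1.toNat else 0)
    (y : ℤ × ℤ) : ENNReal.ofReal |f y| * w y = G y := by
  subst hf
  by_cases h : 0 < y.1 ∧ y.2 = 0
  · have h1 : y.1 ≠ 0 := h.1.ne'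
    simp only [G, w, if_pos h, if_neg h1, mul_one]
    rw [abs_of_pos (by positivity), ← ENNReal.ofReal_ofNat 2, ← ENNReal.ofReal_pow (by norm_num)]
  · simp [G, w, h]

lemma intf (f : ℤ × ℤ → ℝ)
    (hf : f = fun p : ℤ × ℤ => if 0 < p.1 ∧ p.2 = 0 then (2 : ℝ) ^ p.1.toNat else 0)
    (s : Set (ℤ × ℤ)) :
    ∫⁻ y in s, ENNReal.ofReal |f y| ∂μ0 = ∑' y, s.indicator G y := by
  rw [integral_eq]
  exact tsum_congr fun y => by
    by_cases h : y ∈ s <;> simp [Set.indicator, h, F_eq f hf y]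

lemma geomN : ∀ m : ℕ, (∑ j ∈ Finset.range m, (2 : ℝ≥0∞) ^ j) ≤ 2 ^ m := by
  intro m
  induction m with
  | zero => simp
  | succ m ih =>
    rw [Finset.sum_range_succ]
    calc (∑ j ∈ Finset.range m, (2 : ℝ≥0∞) ^ j) + 2 ^ m ≤ 2 ^ m + 2 ^ m := by gcongr
      _ = 2 ^ (m + 1) := by ring

lemma geom (K : ℤ) : (∑ n ∈ Finset.Icc (1 : ℤ) K, (2 : ℝ≥0∞) ^ n.toNat) ≤ 2 ^ (K.toNat + 1) := by
  have himg : ∑ n ∈ Finset.Icc (1 : ℤ) K, (2 : ℝ≥0∞) ^ n.toNat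
      = ∑ j ∈ (Finset.Icc (1 : ℤ) K).image Int.toNat, (2 : ℝ≥0∞) ^ j := by
    rw [Finset.sum_image]
    intro a ha b hb hab
    simp only [Finset.mem_coe, Finset.mem_Icc] at ha hb
    omega
  rw [himg]
  refine le_trans (Finset.sum_le_sum_of_subset ?_) (geomN (K.toNat + 1))
  intro j hj
  simp only [Finset.mem_image, Finset.mem_Icc] at hj
  simp only [Finset.mem_range]
  omega

lemma indicator_G_zero {a b : ℤ} {r : ℝ} {y : ℤ × ℤ}
    (hy : ¬ (1 ≤ y.1 ∧ y.1 ≤ a + ⌈r⌉ - 1 ∧ y.2 = 0)) :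
    (ball ((a, b) : ℤ × ℤ) r).indicator G y = 0 := by
  by_cases hb : y ∈ ball ((a, b) : ℤ × ℤ) r
  · rw [Set.indicator_of_mem hb]
    rw [mem_ball_iff] at hb
    by_cases hG : 0 < y.1 ∧ y.2 = 0
    · exfalso
      apply hy
      refine ⟨hG.1, ?_, hG.2⟩
      have h1 : (y.1 : ℝ) - a < r := lt_of_abs_lt hb.1
      have h2 : y.1 - a < ⌈r⌉ := Int.lt_ceil.2 (by push_cast; linarith)
      omega
    · simp [G, hG]
  · rw [Set.indicator_of_notMem hb]

lemma ball_int_le (a b : ℤ) (r : ℝ) :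
    (∑' y, (ball ((a, b) : ℤ × ℤ) r).indicator G y) ≤ 2 ^ ((a + ⌈r⌉ - 1).toNat + 1) := by
  set K := a + ⌈r⌉ - 1 with hK
  rw [tsum_eq_sum (s := Finset.Icc (1 : ℤ) K ×ˢ ({0} : Finset ℤ)) (by
    intro y hy
    apply indicator_G_zero
    intro hcon
    apply hy
    simp only [Finset.mem_product, Finset.mem_Icc, Finset.mem_singleton]
    exact ⟨⟨hcon.1, hcon.2.1⟩, hcon.2.2⟩)]
  calc ∑ y ∈ Finset.Icc (1 : ℤ) K ×ˢ ({0} : Finset ℤ), (ball ((a, b) : ℤ × ℤ) r).indicator G y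
      ≤ ∑ y ∈ Finset.Icc (1 : ℤ) K ×ˢ ({0} : Finset ℤ), G y := by
        apply Finset.sum_le_sum
        intro y _
        exact Set.indicator_le_self _ _ y
    _ = ∑ n ∈ Finset.Icc (1 : ℤ) K, G (n, 0) := by
        rw [Finset.sum_product]
        simp
    _ ≤ ∑ n ∈ Finset.Icc (1 : ℤ) K, (2 : ℝ≥0∞) ^ n.toNat := by
        apply Finset.sum_le_sum
        intro n hn
        simp only [Finset.mem_Icc] at hn
        simp [G, show (0 : ℤ) < n by omega]
    _ ≤ 2 ^ (K.toNat + 1) := geom K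

lemma part1_key {a b : ℤ} {r : ℝ} (hr : 0 < r)
    (hin : ((-1, 0) : ℤ × ℤ) ∈ ball ((a, b) : ℤ × ℤ) r) :
    (∑' y, (ball ((a, b) : ℤ × ℤ) r).indicator G y) ≤ μ0 (ball ((a, b) : ℤ × ℤ) r) := by
  rw [mem_ball_iff] at hin
  obtain ⟨h1, h2⟩ := hin
  set K := a + ⌈r⌉ - 1 with hKdef
  by_cases hK : K ≤ 0
  · have hz : (∑' y, (ball ((a, b) : ℤ × ℤ) r).indicator G y) = 0 := by
      refine ENNReal.tsum_eq_zero.2 fun y => ?_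
      exact indicator_G_zero (by omega)
    rw [hz]
    exact zero_le
  · push_neg at hK
    -- integer facts
    have ha_lt : (a : ℝ) < r - 1 := by
      have := abs_lt.1 h1
      push_cast at this
      linarith [this.1]
    have ha2 : a + 1 < ⌈r⌉ := Int.lt_ceil.2 (by push_cast; linarith)
    set L := ⌈r⌉ - 1 with hLdef
    have hL1 : 1 ≤ L := by omega
    have hceil_lt : (⌈r⌉ : ℝ) < r + 1 := Int.ceil_lt_add_one r
    have hceil_ge : r ≤ (⌈r⌉ : ℝ) := Int.le_ceil r
    set m0 : ℤ := if 0 ≤ b then b + L else b - L with hm0def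
    have hm0abs : L.toNat ≤ m0.natAbs := by
      rw [hm0def]; split_ifs <;> omega
    have hm0ball : ((0, m0) : ℤ × ℤ) ∈ ball ((a, b) : ℤ × ℤ) r := by
      rw [mem_ball_iff]
      constructor
      · have ha_gt : 2 - (⌈r⌉ : ℝ) ≤ (a : ℝ) := by
          have : 2 - ⌈r⌉ ≤ a := by omega
          exact_mod_cast this
        rw [abs_lt]
        constructor <;> · push_cast; linarith
      · have hd : m0 - b = L ∨ m0 - b = -L := by rw [hm0def]; split_ifs <;> omega
        have habs : |m0 - b| = L := (abs_eq (by omega : (0:ℤ) ≤ L)).2 hd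
        have : ((m0 : ℝ) - b) = ((m0 - b : ℤ) : ℝ) := by push_cast; ring
        rw [this, ← Int.cast_abs, habs]
        have hLr : (L : ℝ) = (⌈r⌉ : ℝ) - 1 := by rw [hLdef]; push_cast; ring
        linarith
    have hK2L : K.toNat + 1 ≤ 2 * L.toNat := by omega
    calc (∑' y, (ball ((a, b) : ℤ × ℤ) r).indicator G y)
        ≤ 2 ^ (K.toNat + 1) := ball_int_le a b r
      _ ≤ 2 ^ (2 * L.toNat) := pow_le_pow_right₀ one_le_two hK2L
      _ = 4 ^ L.toNat := by rw [pow_mul]; norm_num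
      _ ≤ 4 ^ m0.natAbs := pow_le_pow_right₀ (by norm_num) hm0abs
      _ = w (0, m0) := by simp [w]
      _ ≤ μ0 (ball ((a, b) : ℤ × ℤ) r) := mu_ge_point hm0ball

lemma sq_le : ∀ n : ℕ, 8 ≤ n → (2 * n - 1) * (2 * n - 1) ≤ 2 ^ n := by
  intro n hn
  induction n, hn using Nat.le_induction with
  | base => norm_num
  | succ n hn ih =>
    have h1 : (2 * (n + 1) - 1) * (2 * (n + 1) - 1) ≤ 2 * ((2 * n - 1) * (2 * n - 1)) := by
      zify [show (1:ℕ) ≤ 2*n by omega, show (1:ℕ) ≤ 2*(n+1) by omega]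
      nlinarith
    calc (2 * (n + 1) - 1) * (2 * (n + 1) - 1) ≤ 2 * ((2 * n - 1) * (2 * n - 1)) := h1
      _ ≤ 2 * 2 ^ n := by omega
      _ = 2 ^ (n + 1) := by ring

lemma muBN_le {N : ℤ} (hN : 8 ≤ N) :
    μ0 (ball ((N, 0) : ℤ × ℤ) (N : ℝ)) ≤ (((2 * N - 1).toNat * (2 * N - 1).toNat : ℕ) : ℝ≥0∞) := by
  rw [mu_eq]
  set sq : Finset (ℤ × ℤ) := Finset.Icc (1 : ℤ) (2 * N - 1) ×ˢ Finset.Icc (1 - N) (N - 1) with hsq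
  have hmem : ∀ y : ℤ × ℤ, y ∈ ball ((N, 0) : ℤ × ℤ) (N : ℝ) → y ∈ sq := by
    intro y hy
    rw [mem_ball_iff] at hy
    obtain ⟨hy1, hy2⟩ := hy
    dsimp only at hy1 hy2
    rw [abs_lt] at hy1 hy2
    push_cast at hy1 hy2
    have a1 : ((0 : ℤ) : ℝ) < (y.1 : ℝ) := by push_cast; linarith [hy1.1]
    have a2 : (y.1 : ℝ) < ((2 * N : ℤ) : ℝ) := by push_cast; linarith [hy1.2]
    have b1 : ((-N : ℤ) : ℝ) < (y.2 : ℝ) := by push_cast; linarith [hy2.1]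
    have b2 : (y.2 : ℝ) < ((N : ℤ) : ℝ) := by push_cast; linarith [hy2.2]
    have a1' : (0 : ℤ) < y.1 := by exact_mod_cast a1
    have a2' : y.1 < 2 * N := by exact_mod_cast a2
    have b1' : -N < y.2 := by exact_mod_cast b1
    have b2' : y.2 < N := by exact_mod_cast b2
    simp only [hsq, Finset.mem_product, Finset.mem_Icc]
    omega
  have hcard : sq.card = (2 * N - 1).toNat * (2 * N - 1).toNat := by
    rw [hsq, Finset.card_product, Int.card_Icc, Int.card_Icc]
    congr 1 <;> omega
  refine le_trans (le_of_eq (tsum_eq_sum (s := sq) ?_)) ?_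
  · intro y hy
    exact Set.indicator_of_notMem (fun hb => hy (hmem y hb)) _
  · calc ∑ y ∈ sq, (ball ((N, 0) : ℤ × ℤ) (N : ℝ)).indicator w y
        ≤ ∑ _y ∈ sq, (1 : ℝ≥0∞) := by
          apply Finset.sum_le_sum
          intro y hy
          have hy1 : y.1 ≠ 0 := by
            simp only [hsq, Finset.mem_product, Finset.mem_Icc] at hy
            omega
          calc (ball ((N, 0) : ℤ × ℤ) (N : ℝ)).indicator w y ≤ w y := Set.indicator_le_self _ _ y
            _ = 1 := by simp [w, hy1]
      _ = (sq.card : ℝ≥0∞) := by simp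
      _ = _ := by rw [hcard]

lemma IBN_ge {N : ℤ} (hN : 8 ≤ N) :
    (2 : ℝ≥0∞) ^ (2 * N - 1).toNat ≤ ∑' y, (ball ((N, 0) : ℤ × ℤ) (N : ℝ)).indicator G y := by
  have hNr : (8 : ℝ) ≤ (N : ℝ) := by exact_mod_cast hN
  have hpt : ((2 * N - 1, 0) : ℤ × ℤ) ∈ ball ((N, 0) : ℤ × ℤ) (N : ℝ) := by
    rw [mem_ball_iff]
    constructor
    · rw [abs_lt]; push_cast; constructor <;> linarith
    · rw [abs_lt]; push_cast; constructor <;> linarith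
  have hle := ENNReal.le_tsum (f := fun y => (ball ((N, 0) : ℤ × ℤ) (N : ℝ)).indicator G y)
    ((2 * N - 1, 0) : ℤ × ℤ)
  refine le_trans ?_ hle
  rw [Set.indicator_of_mem hpt]
  simp [G, show (0 : ℤ) < 2 * N - 1 by omega, show (1 : ℤ) < 2 * N by omega]

end NCM13

open NCM13 in
/-- On `ℤ²` with the supremum metric and measure with point weights
`μ(n,m) = 4^{|m|}` if `n = 0` and `1` otherwise, for `f(n,m) = 2^n` if `n > 0, m = 0`
and `0` otherwise, the non-centered maximal function satisfies `Mf(−1,0) < ∞`;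
consequently the non-centered maximal operator does not possess the dichotomy property. -/
theorem noncenteredMaximal_lt_top_and_no_dichotomy (μ : Measure (ℤ × ℤ))
    (hμ : μ = Measure.count.withDensity
      (fun p : ℤ × ℤ => if p.1 = 0 then (4 : ℝ≥0∞) ^ p.2.natAbs else 1))
    (f : ℤ × ℤ → ℝ)
    (hf : f = fun p : ℤ × ℤ => if 0 < p.1 ∧ p.2 = 0 then (2 : ℝ) ^ p.1.toNat else 0) :
    noncenteredMaximal μ f ((-1, 0) : ℤ × ℤ) < ⊤ ∧
    ¬ (∀ g : ℤ × ℤ → ℝ, LocallyIntegrableBall μ g →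
        μ {x | noncenteredMaximal μ g x = ⊤} = 0 ∨
          {x | noncenteredMaximal μ g x = ⊤} = Set.univ) := by
  obtain rfl : μ = μ0 := hμ
  -- Part 1
  have hle1 : noncenteredMaximal μ0 f ((-1, 0) : ℤ × ℤ) ≤ 1 := by
    rw [noncenteredMaximal]
    refine iSup_le fun c => iSup_le fun r => iSup_le fun hr => iSup_le fun hmem => ?_
    obtain ⟨a, b⟩ := c
    rw [intf f hf]
    refine ENNReal.div_le_of_le_mul ?_
    rw [one_mul]
    exact part1_key hr hmem
  have hlt : noncenteredMaximal μ0 f ((-1, 0) : ℤ × ℤ) < ⊤ :=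
    lt_of_le_of_lt hle1 one_lt_top
  refine ⟨hlt, ?_⟩
  -- local integrability of f
  have hloc : LocallyIntegrableBall μ0 f := by
    intro c r _
    obtain ⟨a, b⟩ := c
    rw [intf f hf]
    exact lt_of_le_of_lt (ball_int_le a b r) (ENNReal.pow_lt_top (by norm_num))
  -- ratio lower bound
  have hratio : ∀ N : ℤ, 8 ≤ N →
      (2 : ℝ≥0∞) ^ (N - 1).toNat ≤ noncenteredMaximal μ0 f ((1, 0) : ℤ × ℤ) := by
    intro N hN
    have hNr : (8 : ℝ) ≤ (N : ℝ) := by exact_mod_cast hN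
    have hrpos : (0 : ℝ) < (N : ℝ) := by linarith
    have hmem1 : ((1, 0) : ℤ × ℤ) ∈ ball ((N, 0) : ℤ × ℤ) (N : ℝ) := by
      rw [mem_ball_iff]
      constructor
      · rw [abs_lt]; push_cast; constructor <;> linarith
      · rw [abs_lt]; push_cast; constructor <;> linarith
    have hstep : (2 : ℝ≥0∞) ^ (N - 1).toNat ≤
        (∫⁻ y in ball ((N, 0) : ℤ × ℤ) (N : ℝ), ENNReal.ofReal |f y| ∂μ0) /
          μ0 (ball ((N, 0) : ℤ × ℤ) (N : ℝ)) := by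
      rw [intf f hf]
      have hμne : μ0 (ball ((N, 0) : ℤ × ℤ) (N : ℝ)) ≠ 0 := by
        intro h0
        have h1 : w ((1, 0) : ℤ × ℤ) ≤ μ0 (ball ((N, 0) : ℤ × ℤ) (N : ℝ)) := mu_ge_point hmem1
        rw [h0] at h1
        simp [w] at h1
      have hμnt : μ0 (ball ((N, 0) : ℤ × ℤ) (N : ℝ)) ≠ ⊤ :=
        ne_top_of_le_ne_top (ENNReal.natCast_ne_top _) (muBN_le hN)
      rw [ENNReal.le_div_iff_mul_le (Or.inl hμne) (Or.inl hμnt)]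
      have hnat : ((2 * N - 1).toNat * (2 * N - 1).toNat : ℕ) ≤ 2 ^ N.toNat := by
        have heq : (2 * N - 1).toNat = 2 * N.toNat - 1 := by omega
        rw [heq]
        exact sq_le N.toNat (by omega)
      calc (2 : ℝ≥0∞) ^ (N - 1).toNat * μ0 (ball ((N, 0) : ℤ × ℤ) (N : ℝ))
          ≤ 2 ^ (N - 1).toNat * (((2 * N - 1).toNat * (2 * N - 1).toNat : ℕ) : ℝ≥0∞) := by
            gcongr
            exact muBN_le hN
        _ ≤ 2 ^ (N - 1).toNat * ((2 ^ N.toNat : ℕ) : ℝ≥0∞) :=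
            mul_le_mul_right (by exact_mod_cast hnat) _
        _ = 2 ^ ((N - 1).toNat + N.toNat) := by push_cast; rw [← pow_add]
        _ ≤ 2 ^ (2 * N - 1).toNat := pow_le_pow_right₀ one_le_two (by omega)
        _ ≤ ∑' y, (ball ((N, 0) : ℤ × ℤ) (N : ℝ)).indicator G y := IBN_ge hN
    refine le_trans hstep ?_
    rw [noncenteredMaximal]
    exact le_iSup_of_le ((N, 0) : ℤ × ℤ) (le_iSup_of_le (N : ℝ)
      (le_iSup_of_le hrpos (le_iSup_of_le hmem1 le_rfl)))
  -- maximal function is infinite at (1,0)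
  have htop : noncenteredMaximal μ0 f ((1, 0) : ℤ × ℤ) = ⊤ := by
    by_contra hne
    obtain ⟨n, hn⟩ := ENNReal.exists_nat_gt hne
    have h1 := hratio ((n : ℤ) + 9) (by omega)
    have he : (((n : ℤ) + 9 - 1).toNat) = n + 8 := by omega
    rw [he] at h1
    have h2 : ((n : ℕ) : ℝ≥0∞) < 2 ^ n := by
      have : n < 2 ^ n := Nat.lt_two_pow_self
      exact_mod_cast this
    have h3 : (2 : ℝ≥0∞) ^ n ≤ 2 ^ (n + 8) := pow_le_pow_right₀ one_le_two (by omega)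
    exact lt_irrefl _ (h1.trans_lt (hn.trans (h2.trans_le h3)))
  intro hdich
  rcases hdich f hloc with h0 | huniv
  · have hmemS : ((1, 0) : ℤ × ℤ) ∈ {x | noncenteredMaximal μ0 f x = ⊤} := htop
    have h1 : w ((1, 0) : ℤ × ℤ) ≤ μ0 {x | noncenteredMaximal μ0 f x = ⊤} := mu_ge_point hmemS
    rw [h0] at h1
    simp [w] at h1
  · have : ((-1, 0) : ℤ × ℤ) ∈ {x | noncenteredMaximal μ0 f x = ⊤} := huniv ▸ mem_univ _
    exact hlt.ne this
end

section
/- Consider ℤ² with the supremum metric d_∞ and the measure μ defined by μ(n,m) = 4^{|m|} if n = 0; μ(n,m) = 2^{n²} if n < 0 and m = 0; and μ(n,m) = 1 otherwise. Let g(n,m) = 2^{n²} if n > 0 and m = 0, and g(n,m) = 0 otherwise. Then the centered maximal function satisfies M^c g(1,0) = ∞. -/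
open MeasureTheory Metric Filter Set ENNReal

theorem centeredMaximal_aux (μ : Measure (ℤ × ℤ))
    (hμ : μ = Measure.count.withDensity
      (fun p : ℤ × ℤ =>
        if p.1 = 0 then (4 : ℝ≥0∞) ^ p.2.natAbs
        else if p.1 < 0 ∧ p.2 = 0 then (2 : ℝ≥0∞) ^ (p.1 ^ 2).toNat
        else 1))
    (g : ℤ × ℤ → ℝ)
    (hg : g = fun p : ℤ × ℤ => if 0 < p.1 ∧ p.2 = 0 then (2 : ℝ) ^ (p.1 ^ 2).toNat else 0)
    (n : ℕ) :
    (n : ℝ≥0∞) ≤ (∫⁻ y in Metric.ball ((1,0) : ℤ×ℤ) ((n+6 : ℕ) : ℝ), ENNReal.ofReal |g y| ∂μ)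
      / μ (Metric.ball ((1,0) : ℤ×ℤ) ((n+6 : ℕ) : ℝ)) := by
  set w : ℤ × ℤ → ℝ≥0∞ := fun p : ℤ × ℤ =>
        if p.1 = 0 then (4 : ℝ≥0∞) ^ p.2.natAbs
        else if p.1 < 0 ∧ p.2 = 0 then (2 : ℝ≥0∞) ^ (p.1 ^ 2).toNat
        else 1 with hw
  set k : ℕ := n + 6 with hk
  have hk6 : 6 ≤ k := by omega
  have h6k : 6 * k ≤ k * k := Nat.mul_le_mul_right k hk6
  set B : Set (ℤ × ℤ) := Metric.ball ((1,0) : ℤ×ℤ) (k : ℝ) with hB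
  have hBmeas : MeasurableSet B := (Set.to_countable B).measurableSet
  -- ball membership
  have hball : ∀ p : ℤ × ℤ, p ∈ B ↔ |p.1 - 1| < (k:ℤ) ∧ |p.2| < (k:ℤ) := by
    intro p
    rw [hB, Metric.mem_ball, Prod.dist_eq, max_lt_iff,
      (by rfl : ((1,0) : ℤ×ℤ).1 = 1), (by rfl : ((1,0) : ℤ×ℤ).2 = 0),
      Int.dist_eq, Int.dist_eq]
    push_cast
    rw [sub_zero]
    constructor <;> rintro ⟨h1, h2⟩ <;>
      exact ⟨by exact_mod_cast h1, by exact_mod_cast h2⟩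
  have hball' : ∀ p : ℤ × ℤ, p ∈ B ↔
      (2 - (k:ℤ) ≤ p.1 ∧ p.1 ≤ (k:ℤ)) ∧ (1 - (k:ℤ) ≤ p.2 ∧ p.2 ≤ (k:ℤ) - 1) := by
    intro p
    rw [hball p, abs_lt, abs_lt]
    omega
  -- the point (k, 0)
  have hpt_mem : (((k:ℤ), (0:ℤ)) : ℤ × ℤ) ∈ B := by rw [hball']; constructor <;> constructor <;> simp <;> omega
  have hμpt : μ {(((k:ℤ), (0:ℤ)) : ℤ × ℤ)} = 1 := by
    rw [hμ, withDensity_apply _ (measurableSet_singleton _), lintegral_singleton,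
      Measure.count_singleton, mul_one]
    have h1 : ((k:ℤ) ≠ 0) := by omega
    have h2 : ¬((k:ℤ) < 0) := by omega
    simp [hw, h1, h2]
  -- numerator lower bound
  have hnum : (2:ℝ≥0∞) ^ (k*k) ≤ ∫⁻ y in B, ENNReal.ofReal |g y| ∂μ := by
    refine le_trans ?_ (lintegral_mono_set (Set.singleton_subset_iff.2 hpt_mem))
    rw [lintegral_singleton, hμpt, mul_one, hg]
    have h0k : (0:ℤ) < (k:ℤ) := by omega
    simp only [h0k, and_self, if_pos, and_true]
    have htn : (((k:ℤ)) ^ 2).toNat = k * k := by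
      rw [← Nat.cast_pow, Int.toNat_natCast, sq]
    rw [htn, abs_of_pos (by positivity), ENNReal.ofReal_pow (by norm_num)]
    norm_num
  -- pointwise weight bound on the ball
  have hwle : ∀ p ∈ B, w p ≤ (2:ℝ≥0∞) ^ (k*k - 4*k + 4) := by
    intro p hp
    rw [hball'] at hp
    obtain ⟨⟨h1a, h1b⟩, h2a, h2b⟩ := hp
    simp only [hw]
    by_cases hp1 : p.1 = 0
    · rw [if_pos hp1]
      have : (4:ℝ≥0∞) ^ p.2.natAbs = 2 ^ (2 * p.2.natAbs) := by
        rw [pow_mul]; norm_num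
      rw [this]
      exact pow_le_pow_right₀ one_le_two (by omega)
    · rw [if_neg hp1]
      by_cases hp2 : p.1 < 0 ∧ p.2 = 0
      · rw [if_pos hp2]
        have hsq : (p.1 ^ 2).toNat ≤ k*k - 4*k + 4 := by
          have h1' : p.1 ^ 2 ≤ ((k:ℤ) - 2) ^ 2 := by nlinarith [hp2.1]
          have h2' : (((k:ℤ) - 2) ^ 2).toNat = (k-2) * (k-2) := by
            have e : ((k:ℤ) - 2) = ((k - 2 : ℕ) : ℤ) := by omega
            rw [e, ← Nat.cast_pow, Int.toNat_natCast, sq]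
          have h4' := Int.toNat_le_toNat h1'
          rw [h2'] at h4'
          have h3' : (k-2) * (k-2) = k*k - 4*k + 4 := by
            have hA : 2 ≤ k := by omega
            have hB2 : 4*k ≤ k*k := by nlinarith
            zify [hA, hB2]
            ring
          omega
        exact pow_le_pow_right₀ one_le_two hsq
      · rw [if_neg hp2]
        exact one_le_pow_of_one_le' one_le_two _
  -- counting bound
  set box : Finset (ℤ × ℤ) := Finset.Icc (2 - (k:ℤ)) k ×ˢ Finset.Icc (1 - (k:ℤ)) ((k:ℤ) - 1) with hbox
  have hsub : B ⊆ ↑box := by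
    intro p hp
    rw [hball'] at hp
    simp only [hbox, Finset.coe_product, Set.mem_prod, Finset.coe_Icc, Set.mem_Icc]
    omega
  have hcard : (box.card : ℝ≥0∞) ≤ 2 ^ (2*k + 2) := by
    have hc : box.card = (2*k - 1) * (2*k - 1) := by
      rw [hbox, Finset.card_product, Int.card_Icc, Int.card_Icc]
      have e1 : ((k:ℤ) + 1 - (2 - (k:ℤ))) = ((2*k - 1 : ℕ) : ℤ) := by push_cast; omega
      have e2 : ((k:ℤ) - 1 + 1 - (1 - (k:ℤ))) = ((2*k - 1 : ℕ) : ℤ) := by push_cast; omega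
      rw [e1, e2, Int.toNat_natCast]
    rw [hc]
    have h1 : 2*k - 1 ≤ 2 ^ (k+1) := by
      have := (Nat.lt_two_pow_self (n := k)).le
      calc 2*k - 1 ≤ 2 * 2^k := by omega
      _ = 2^(k+1) := by ring
    calc ((((2*k-1) * (2*k-1) : ℕ)) : ℝ≥0∞) ≤ (((2^(k+1) * 2^(k+1) : ℕ)) : ℝ≥0∞) := by
          exact_mod_cast Nat.mul_le_mul h1 h1
      _ = 2 ^ (2*k+2) := by push_cast; rw [← pow_add]; congr 1; omega
  -- denominator bound
  have hden : μ B ≤ (2:ℝ≥0∞) ^ (k*k - 2*k + 6) := by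
    rw [hμ, withDensity_apply _ hBmeas]
    calc ∫⁻ p in B, w p ∂Measure.count
        ≤ ∫⁻ _ in B, (2:ℝ≥0∞) ^ (k*k - 4*k + 4) ∂Measure.count :=
          setLIntegral_mono' hBmeas hwle
      _ = (2:ℝ≥0∞) ^ (k*k - 4*k + 4) * Measure.count B := setLIntegral_const _ _
      _ ≤ (2:ℝ≥0∞) ^ (k*k - 4*k + 4) * Measure.count (box : Set (ℤ×ℤ)) :=
          mul_le_mul_right (measure_mono hsub) _
      _ = (2:ℝ≥0∞) ^ (k*k - 4*k + 4) * box.card := by rw [Measure.count_apply_finset]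
      _ ≤ (2:ℝ≥0∞) ^ (k*k - 4*k + 4) * 2 ^ (2*k + 2) := mul_le_mul_right hcard _
      _ = (2:ℝ≥0∞) ^ (k*k - 2*k + 6) := by rw [← pow_add]; congr 1; omega
  -- conclude
  have hBpos : μ B ≠ 0 := by
    intro h0
    have hm := measure_mono (μ := μ) (Set.singleton_subset_iff.2 hpt_mem)
    rw [hμpt, h0] at hm
    simp at hm
  have hBfin : μ B ≠ ⊤ := (lt_of_le_of_lt hden (ENNReal.pow_lt_top ENNReal.ofNat_lt_top)).ne
  rw [ENNReal.le_div_iff_mul_le (Or.inl hBpos) (Or.inl hBfin)]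
  have hn2 : (n:ℝ≥0∞) ≤ 2 ^ (2*k - 6) :=
    le_trans (by exact_mod_cast (Nat.lt_two_pow_self (n := n)).le)
      (pow_le_pow_right₀ one_le_two (by omega))
  calc (n:ℝ≥0∞) * μ B ≤ 2 ^ (2*k - 6) * 2 ^ (k*k - 2*k + 6) := mul_le_mul' hn2 hden
    _ = 2 ^ (k*k) := by rw [← pow_add]; congr 1; omega
    _ ≤ _ := hnum

/-- On `ℤ²` with the supremum metric and measure with point weights
`μ(n,m) = 4^{|m|}` if `n = 0`, `μ(n,m) = 2^{n²}` if `n < 0, m = 0`, and `1` otherwise,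
for `g(n,m) = 2^{n²}` if `n > 0, m = 0` and `0` otherwise, the centered maximal function
satisfies `M^c g(1,0) = ∞`. -/
theorem centeredMaximal_eq_top_at_one (μ : Measure (ℤ × ℤ))
    (hμ : μ = Measure.count.withDensity
      (fun p : ℤ × ℤ =>
        if p.1 = 0 then (4 : ℝ≥0∞) ^ p.2.natAbs
        else if p.1 < 0 ∧ p.2 = 0 then (2 : ℝ≥0∞) ^ (p.1 ^ 2).toNat
        else 1))
    (g : ℤ × ℤ → ℝ)
    (hg : g = fun p : ℤ × ℤ => if 0 < p.1 ∧ p.2 = 0 then (2 : ℝ) ^ (p.1 ^ 2).toNat else 0) :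
    centeredMaximal μ g ((1, 0) : ℤ × ℤ) = ⊤ := by
  rw [centeredMaximal, eq_top_iff, ← ENNReal.iSup_natCast]
  refine iSup_le fun n => ?_
  refine le_trans (centeredMaximal_aux μ hμ g hg n) ?_
  exact le_iSup₂ (f := fun (r : ℝ) (_ : 0 < r) =>
      (∫⁻ y in Metric.ball ((1,0) : ℤ×ℤ) r, ENNReal.ofReal |g y| ∂μ)
        / μ (Metric.ball ((1,0) : ℤ×ℤ) r))
    ((n+6 : ℕ) : ℝ) (by positivity)
end

section
/- Consider ℤ² with the supremum metric d_∞ and the measure μ defined by μ(n,m) = 4^{|m|} if n = 0; μ(n,m) = 2^{n²} if n < 0 and m = 0; and μ(n,m) = 1 otherwise. Let g(n,m) = 2^{n²} if n > 0 and m = 0, and g(n,m) = 0 otherwise. Then the centered maximal function satisfies M^c g(−1,0) < ∞. Consequently, the centered maximal operator M^c associated with this space does not possess the dichotomy property. -/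
open MeasureTheory Metric Filter Set ENNReal

/-! ### Auxiliary material -/

namespace Statement15Aux

lemma setLintegral_count_eq (s : Set (ℤ × ℤ)) (F : ℤ × ℤ → ℝ≥0∞) :
    ∫⁻ y in s, F y ∂Measure.count = ∑' y : s, F y := by
  rw [tsum_subtype, ← lintegral_count]
  exact (lintegral_indicator s.to_countable.measurableSet F).symm

lemma lint_wd (w : ℤ × ℤ → ℝ≥0∞) (s : Set (ℤ × ℤ)) (F : ℤ × ℤ → ℝ≥0∞) :
    ∫⁻ y in s, F y ∂(Measure.count.withDensity w) = ∑' y : s, F y * w y := by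
  rw [restrict_withDensity s.to_countable.measurableSet,
    lintegral_withDensity_eq_lintegral_mul _ (measurable_of_countable w)
      (measurable_of_countable F), setLintegral_count_eq]
  simp [mul_comm]

lemma meas_wd (w : ℤ × ℤ → ℝ≥0∞) (s : Set (ℤ × ℤ)) :
    (Measure.count.withDensity w) s = ∑' y : s, w y := by
  rw [withDensity_apply _ s.to_countable.measurableSet, setLintegral_count_eq]

lemma mem_ball_iff' (x y : ℤ × ℤ) (r : ℝ) :
    y ∈ Metric.ball x r ↔ ((|y.1 - x.1| : ℤ) : ℝ) < r ∧ ((|y.2 - x.2| : ℤ) : ℝ) < r := by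
  simp only [Metric.mem_ball, Prod.dist_eq, Int.dist_eq, max_lt_iff]
  push_cast
  tauto

noncomputable def W : ℤ × ℤ → ℝ≥0∞ := fun p : ℤ × ℤ =>
  if p.1 = 0 then (4 : ℝ≥0∞) ^ p.2.natAbs
  else if p.1 < 0 ∧ p.2 = 0 then (2 : ℝ≥0∞) ^ (p.1 ^ 2).toNat
  else 1

noncomputable def G : ℤ × ℤ → ℝ :=
  fun p : ℤ × ℤ => if 0 < p.1 ∧ p.2 = 0 then (2 : ℝ) ^ (p.1 ^ 2).toNat else 0

lemma W_ne_top (p : ℤ × ℤ) : W p ≠ ⊤ := by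
  simp only [W]
  split_ifs
  · exact ENNReal.pow_ne_top (by norm_num)
  · exact ENNReal.pow_ne_top (by norm_num)
  · exact one_ne_top

lemma F_eq (y : ℤ × ℤ) :
    ENNReal.ofReal |G y| * W y
      = if 0 < y.1 ∧ y.2 = 0 then (2 : ℝ≥0∞) ^ (y.1 ^ 2).toNat else 0 := by
  obtain ⟨n, m⟩ := y
  simp only [G, W]
  by_cases h : 0 < n ∧ m = 0
  · obtain ⟨hn, rfl⟩ := h
    rw [if_pos (⟨hn, rfl⟩ : 0 < n ∧ (0:ℤ) = 0), if_neg hn.ne',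
      if_neg (by exact fun hc => absurd hc.1 hn.asymm), mul_one,
      abs_of_nonneg (by positivity), ENNReal.ofReal_pow (by norm_num)]
    norm_num [hn]
  · simp only [if_neg h, abs_zero, ENNReal.ofReal_zero, zero_mul]

lemma Fle (n : ℤ) (hn : 0 < n) :
    ENNReal.ofReal |G (n, 0)| * W (n, 0) ≤ W (-n - 2, 0) := by
  rw [F_eq, if_pos (⟨hn, rfl⟩ : 0 < ((n : ℤ), (0 : ℤ)).1 ∧ ((n : ℤ), (0 : ℤ)).2 = 0)]
  simp only [W]
  rw [if_neg (show ¬((-n - 2 : ℤ), (0:ℤ)).1 = 0 by simp; omega)]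
  rw [if_pos (show (-n - 2 : ℤ) < 0 ∧ True from ⟨by omega, trivial⟩)]
  exact pow_le_pow_right₀ one_le_two (Int.toNat_le_toNat (by nlinarith))

lemma key1 (r : ℝ) :
    ∑' y : Metric.ball ((-1, 0) : ℤ × ℤ) r, (ENNReal.ofReal |G y.1| * W y.1)
      ≤ ∑' y : Metric.ball ((-1, 0) : ℤ × ℤ) r, W y.1 := by
  set B := Metric.ball ((-1, 0) : ℤ × ℤ) r with hB
  set S : Set (ℤ × ℤ) := {p | 0 < p.1 ∧ p.2 = 0} with hS
  set F : ℤ × ℤ → ℝ≥0∞ := fun y => ENNReal.ofReal |G y| * W y with hF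
  have hFS : S.indicator F = F := by
    funext p
    by_cases hp : p ∈ S
    · rw [Set.indicator_of_mem hp]
    · rw [Set.indicator_of_notMem hp]
      exact ((F_eq p).trans (if_neg hp)).symm
  have h2 : (B ∩ S).indicator F = B.indicator F := by
    rw [← Set.indicator_indicator, hFS]
  have h1 : ∑' y : B, F y = ∑' y : ↥(B ∩ S), F y := by
    rw [tsum_subtype, tsum_subtype, h2]
  rw [h1]
  have hmem : ∀ n m : ℤ, (n, m) ∈ B → 0 < n → ((-n - 2, 0) : ℤ × ℤ) ∈ B := by
    intro n m hyB hn
    rw [hB, mem_ball_iff'] at hyB ⊢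
    simp only at hyB ⊢
    have e1 : |(-n - 2) - (-1)| = |n - (-1)| := by
      rw [show (-n - 2) - (-1) = -(n - (-1)) by ring, abs_neg]
    have e2 : |(0 : ℤ) - 0| ≤ |m - 0| := by
      simp [abs_nonneg]
    refine ⟨by rw [e1]; exact hyB.1, lt_of_le_of_lt ?_ hyB.2⟩
    exact_mod_cast e2
  refine Summable.tsum_le_tsum_of_inj
    (fun y : ↥(B ∩ S) => (⟨(-y.1.1 - 2, 0), hmem y.1.1 y.1.2 y.2.1 y.2.2.1⟩ : B))
    ?_ (fun _ _ => zero_le) ?_ ENNReal.summable ENNReal.summable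
  · rintro ⟨⟨n, m⟩, hyB, hn, hm⟩ ⟨⟨n', m'⟩, hyB', hn', hm'⟩ hee
    simp only [Subtype.mk.injEq, Prod.mk.injEq] at hee ⊢
    simp only at hm hm' hn hn'
    apply Subtype.ext; simp only [Prod.mk.injEq]
    omega
  · rintro ⟨⟨n, m⟩, hyB, hn, hm⟩
    simp only at hn hm
    subst hm
    exact Fle n hn

lemma natineq (n : ℕ) :
    n * (4 * (2 * n + 20) ^ 2) * 2 ^ ((2 * n + 18) ^ 2 + 2 * (2 * n + 20))
      ≤ 2 ^ ((2 * n + 20) ^ 2) := by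
  have h1 : n ≤ 2 ^ n := (Nat.lt_two_pow_self (n := n)).le
  have h2 : 2 * n + 20 ≤ 2 ^ (n + 5) := by
    have : 2 * n + 20 ≤ 32 * 2 ^ n := by
      have hone : (1:ℕ) ≤ 2 ^ n := Nat.one_le_two_pow
      nlinarith
    calc 2 * n + 20 ≤ 32 * 2 ^ n := this
      _ = 2 ^ (n + 5) := by rw [pow_add]; ring
  have hmain : n * (4 * (2 * n + 20) ^ 2) ≤ 2 ^ (4 * n + 36) := by
    calc n * (4 * (2 * n + 20) ^ 2) ≤ 2 ^ n * (4 * (2 ^ (n + 5)) ^ 2) :=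
          Nat.mul_le_mul h1 (Nat.mul_le_mul_left _ (Nat.pow_le_pow_left h2 2))
      _ = 2 ^ (n + (2 + (n + 5) * 2)) := by ring
      _ ≤ 2 ^ (4 * n + 36) := Nat.pow_le_pow_right (by norm_num) (by omega)
  calc n * (4 * (2 * n + 20) ^ 2) * 2 ^ ((2 * n + 18) ^ 2 + 2 * (2 * n + 20))
      ≤ 2 ^ (4 * n + 36) * 2 ^ ((2 * n + 18) ^ 2 + 2 * (2 * n + 20)) :=
        Nat.mul_le_mul hmain le_rfl
    _ = 2 ^ ((4 * n + 36) + ((2 * n + 18) ^ 2 + 2 * (2 * n + 20))) := (pow_add 2 _ _).symm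
    _ = 2 ^ ((2 * n + 20) ^ 2) := by congr 1; ring

lemma Wbound (n : ℕ) (p : ℤ × ℤ)
    (h1 : 2 - (2 * (n:ℤ) + 20) ≤ p.1) (h2 : p.1 ≤ 2 * (n:ℤ) + 20)
    (h3 : 1 - (2 * (n:ℤ) + 20) ≤ p.2) (h4 : p.2 ≤ 2 * (n:ℤ) + 20 - 1) :
    W p ≤ (2 : ℝ≥0∞) ^ ((2 * n + 18) ^ 2 + 2 * (2 * n + 20)) := by
  obtain ⟨a, b⟩ := p
  simp only at h1 h2 h3 h4
  simp only [W]
  split_ifs with hc1 hc2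
  · have hb : b.natAbs ≤ 2 * n + 19 := by omega
    have : (4 : ℝ≥0∞) ^ b.natAbs = 2 ^ (2 * b.natAbs) := by
      rw [pow_mul]; norm_num
    rw [this]
    exact pow_le_pow_right₀ one_le_two (by omega)
  · refine pow_le_pow_right₀ one_le_two ?_
    have ha : (a ^ 2).toNat ≤ (2 * n + 18) ^ 2 := by
      rw [Int.toNat_le]
      push_cast
      nlinarith [hc2.1]
    omega
  · exact one_le_two.trans (le_self_pow₀ one_le_two (by positivity))

/-- Part 1: the centered maximal function at `(-1, 0)` is at most 1. -/
lemma part1 : centeredMaximal (Measure.count.withDensity W) G ((-1, 0) : ℤ × ℤ) ≤ 1 := by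
  rw [centeredMaximal]
  refine iSup_le fun r => iSup_le fun hr => ?_
  rw [lint_wd, meas_wd]
  exact ENNReal.div_le_of_le_mul (by rw [one_mul]; exact key1 r)

/-- Local integrability of any function w.r.t. our measure. -/
lemma loc_int (f : ℤ × ℤ → ℝ) :
    LocallyIntegrableBall (Measure.count.withDensity W) f := by
  intro c r hr
  rw [lint_wd]
  set T : Finset (ℤ × ℤ) :=
    Finset.Icc (c.1 - ⌈r⌉) (c.1 + ⌈r⌉) ×ˢ Finset.Icc (c.2 - ⌈r⌉) (c.2 + ⌈r⌉) with hT
  have hsub : Metric.ball c r ⊆ ↑T := by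
    intro y hy
    rw [mem_ball_iff'] at hy
    have k1 : |y.1 - c.1| < ⌈r⌉ := Int.lt_ceil.2 hy.1
    have k2 : |y.2 - c.2| < ⌈r⌉ := Int.lt_ceil.2 hy.2
    rw [abs_lt] at k1 k2
    simp only [hT, Finset.coe_product, Set.mem_prod, Finset.mem_coe, Finset.mem_Icc]
    omega
  calc ∑' y : Metric.ball c r, (ENNReal.ofReal |f y.1| * W y.1)
      ≤ ∑' y : (↑T : Set (ℤ × ℤ)), (ENNReal.ofReal |f y.1| * W y.1) :=
        ENNReal.tsum_mono_subtype (fun y => ENNReal.ofReal |f y| * W y) hsub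
    _ = ∑ y ∈ T, (ENNReal.ofReal |f y| * W y) := by
        exact Finset.tsum_subtype T (fun y => ENNReal.ofReal |f y| * W y)
    _ < ⊤ := ENNReal.sum_lt_top.2 fun p _ =>
        lt_top_iff_ne_top.2 (ENNReal.mul_ne_top ENNReal.ofReal_ne_top (W_ne_top p))

/-- Part 2: the centered maximal function at `(1, 0)` is infinite. -/
lemma part2 : centeredMaximal (Measure.count.withDensity W) G ((1, 0) : ℤ × ℤ) = ⊤ := by
  by_contra hne
  obtain ⟨n, hn⟩ := ENNReal.exists_nat_gt hne
  set k : ℕ := 2 * n + 20 with hk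
  have hkR : (0 : ℝ) < (k : ℝ) := by positivity
  set B := Metric.ball ((1, 0) : ℤ × ℤ) (k : ℝ) with hB
  set E : ℕ := (2 * n + 18) ^ 2 + 2 * (2 * n + 20) with hE
  set T : Finset (ℤ × ℤ) :=
    Finset.Icc (2 - (k:ℤ)) (k:ℤ) ×ˢ Finset.Icc (1 - (k:ℤ)) ((k:ℤ) - 1) with hT
  -- membership facts
  have hmem1 : ((1, 0) : ℤ × ℤ) ∈ B := by
    rw [hB, mem_ball_iff']
    refine ⟨?_, ?_⟩ <;> simpa using hkR
  have hmemk : (((k:ℤ), 0) : ℤ × ℤ) ∈ B := by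
    rw [hB, mem_ball_iff']
    constructor
    · simp only
      rw [show |((k:ℤ) - 1)| = (k:ℤ) - 1 by rw [abs_of_nonneg]; omega]
      push_cast
      linarith
    · simp only [sub_zero, abs_zero, Int.cast_zero]
      exact hkR
  -- numerator lower bound
  have hNum : (2 : ℝ≥0∞) ^ (k ^ 2)
      ≤ ∑' y : B, (ENNReal.ofReal |G y.1| * W y.1) := by
    have := ENNReal.le_tsum (f := fun y : B => ENNReal.ofReal |G y.1| * W y.1)
      ⟨((k:ℤ), 0), hmemk⟩
    refine le_trans (le_of_eq ?_) this
    have hkt : (((k:ℤ)) ^ 2).toNat = k ^ 2 := by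
      rw [show ((k:ℤ) ^ 2) = ((k ^ 2 : ℕ) : ℤ) by push_cast; ring, Int.toNat_natCast]
    rw [F_eq, if_pos (⟨by positivity, rfl⟩ : 0 < (((k:ℤ), (0:ℤ))).1 ∧ (((k:ℤ), (0:ℤ))).2 = 0)]
    simp only
    rw [hkt]
  -- ball inside rectangle
  have hsub : B ⊆ ↑T := by
    intro y hy
    rw [hB, mem_ball_iff'] at hy
    have k1 : |y.1 - 1| < (k:ℤ) := by exact_mod_cast hy.1
    have k2 : |y.2 - 0| < (k:ℤ) := by exact_mod_cast hy.2
    rw [abs_lt] at k1 k2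
    simp only [hT, Finset.coe_product, Set.mem_prod, Finset.mem_coe, Finset.mem_Icc]
    omega
  -- denominator facts
  have hcard : T.card ≤ 4 * k ^ 2 := by
    rw [hT, Finset.card_product, Int.card_Icc, Int.card_Icc]
    rw [show ((k:ℤ) + 1 - (2 - (k:ℤ))) = ((2 * k - 1 : ℕ) : ℤ) by omega,
      show (((k:ℤ) - 1) + 1 - (1 - (k:ℤ))) = ((2 * k - 1 : ℕ) : ℤ) by omega,
      Int.toNat_natCast]
    calc (2 * k - 1) * (2 * k - 1) ≤ (2 * k) * (2 * k) :=
          Nat.mul_le_mul (by omega) (by omega)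
      _ = 4 * k ^ 2 := by ring
  have hDle : ∑' y : B, W y.1 ≤ (T.card : ℝ≥0∞) * 2 ^ E := by
    calc ∑' y : B, W y.1 ≤ ∑' y : (↑T : Set (ℤ × ℤ)), W y.1 :=
          ENNReal.tsum_mono_subtype W hsub
      _ = ∑ y ∈ T, W y := by exact Finset.tsum_subtype T W
      _ ≤ ∑ _y ∈ T, (2 : ℝ≥0∞) ^ E := by
          refine Finset.sum_le_sum fun p hp => ?_
          rw [hT, Finset.mem_product, Finset.mem_Icc, Finset.mem_Icc] at hp
          exact Wbound n p (by exact_mod_cast hp.1.1) (by exact_mod_cast hp.1.2)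
            (by exact_mod_cast hp.2.1) (by exact_mod_cast hp.2.2)
      _ = (T.card : ℝ≥0∞) * 2 ^ E := by rw [Finset.sum_const, nsmul_eq_mul]
  have hD0 : (∑' y : B, W y.1) ≠ 0 := by
    have h1 : W ((1, 0) : ℤ × ℤ) ≤ ∑' y : B, W y.1 :=
      ENNReal.le_tsum (f := fun y : B => W y.1) ⟨(1, 0), hmem1⟩
    have hW1 : W ((1, 0) : ℤ × ℤ) = 1 := by simp [W]
    rw [hW1] at h1
    exact fun hc => by simp [hc] at h1
  have hDtop : (∑' y : B, W y.1) ≠ ⊤ := by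
    refine ne_top_of_le_ne_top ?_ hDle
    exact ENNReal.mul_ne_top (ENNReal.natCast_ne_top _) (ENNReal.pow_ne_top (by norm_num))
  -- the key estimate: n ≤ Num / Den
  have hQ : (n : ℝ≥0∞) ≤
      (∑' y : B, (ENNReal.ofReal |G y.1| * W y.1)) / (∑' y : B, W y.1) := by
    rw [ENNReal.le_div_iff_mul_le (Or.inl hD0) (Or.inl hDtop)]
    calc (n : ℝ≥0∞) * (∑' y : B, W y.1)
        ≤ (n : ℝ≥0∞) * (((4 * k ^ 2 : ℕ) : ℝ≥0∞) * 2 ^ E) := by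
          refine mul_le_mul_right (hDle.trans (mul_le_mul_left ?_ _)) _
          exact_mod_cast Nat.cast_le.2 hcard
      _ = ((n * (4 * k ^ 2) * 2 ^ E : ℕ) : ℝ≥0∞) := by push_cast; ring
      _ ≤ ((2 ^ (k ^ 2) : ℕ) : ℝ≥0∞) := by
          refine Nat.cast_le.2 ?_
          have := natineq n
          simpa [hk, hE] using this
      _ = (2 : ℝ≥0∞) ^ (k ^ 2) := by push_cast; ring
      _ ≤ _ := hNum
  have hle : ((∫⁻ y in Metric.ball ((1,0) : ℤ × ℤ) (k:ℝ), ENNReal.ofReal |G y| ∂(Measure.count.withDensity W)) / (Measure.count.withDensity W) (Metric.ball ((1,0) : ℤ × ℤ) (k:ℝ)))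
      ≤ centeredMaximal (Measure.count.withDensity W) G ((1, 0) : ℤ × ℤ) := by
    rw [centeredMaximal]
    exact le_iSup_of_le (k : ℝ) (le_iSup_of_le hkR le_rfl)
  rw [lint_wd, meas_wd] at hle
  exact absurd ((hQ.trans hle).trans_lt hn) (lt_irrefl _)

lemma mainthm :
    centeredMaximal (Measure.count.withDensity W) G ((-1, 0) : ℤ × ℤ) < ⊤ ∧
    ¬ (∀ h : ℤ × ℤ → ℝ, LocallyIntegrableBall (Measure.count.withDensity W) h →
        (Measure.count.withDensity W) {x | centeredMaximal (Measure.count.withDensity W) h x = ⊤} = 0 ∨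
          {x | centeredMaximal (Measure.count.withDensity W) h x = ⊤} = Set.univ) := by
  have hlt : centeredMaximal (Measure.count.withDensity W) G ((-1, 0) : ℤ × ℤ) < ⊤ :=
    lt_of_le_of_lt part1 one_lt_top
  refine ⟨hlt, fun hdich => ?_⟩
  rcases hdich G (loc_int G) with h0 | huniv
  · have hsub : ({((1:ℤ), (0:ℤ))} : Set (ℤ × ℤ))
        ⊆ {x | centeredMaximal (Measure.count.withDensity W) G x = ⊤} := by
      intro x hx
      rw [Set.mem_singleton_iff] at hx
      subst hx
      exact part2
    have h1 : (Measure.count.withDensity W) ({((1:ℤ), (0:ℤ))} : Set (ℤ × ℤ)) ≠ 0 := by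
      rw [meas_wd]
      have h2 : W ((1, 0) : ℤ × ℤ)
          ≤ ∑' y : ({((1:ℤ), (0:ℤ))} : Set (ℤ × ℤ)), W y.1 :=
        ENNReal.le_tsum (f := fun y : ({((1:ℤ), (0:ℤ))} : Set (ℤ × ℤ)) => W y.1) ⟨(1, 0), rfl⟩
      have hW1 : W ((1, 0) : ℤ × ℤ) = 1 := by simp [W]
      rw [hW1] at h2
      exact fun hc => by rw [hc] at h2; simp at h2
    exact h1 (le_antisymm (h0 ▸ measure_mono hsub) zero_le)
  · have : ((-1, 0) : ℤ × ℤ) ∈ {x | centeredMaximal (Measure.count.withDensity W) G x = ⊤} := by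
      rw [huniv]; trivial
    exact absurd this (by simpa using hlt.ne)

end Statement15Aux

/-- On `ℤ²` with the supremum metric and measure with point weights
`μ(n,m) = 4^{|m|}` if `n = 0`, `μ(n,m) = 2^{n²}` if `n < 0, m = 0`, and `1` otherwise,
for `g(n,m) = 2^{n²}` if `n > 0, m = 0` and `0` otherwise, the centered maximal function
satisfies `M^c g(−1,0) < ∞`; consequently the centered maximal operator does not possess
the dichotomy property. -/
theorem centeredMaximal_lt_top_and_no_dichotomy (μ : Measure (ℤ × ℤ))
    (hμ : μ = Measure.count.withDensity
      (fun p : ℤ × ℤ =>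
        if p.1 = 0 then (4 : ℝ≥0∞) ^ p.2.natAbs
        else if p.1 < 0 ∧ p.2 = 0 then (2 : ℝ≥0∞) ^ (p.1 ^ 2).toNat
        else 1))
    (g : ℤ × ℤ → ℝ)
    (hg : g = fun p : ℤ × ℤ => if 0 < p.1 ∧ p.2 = 0 then (2 : ℝ) ^ (p.1 ^ 2).toNat else 0) :
    centeredMaximal μ g ((-1, 0) : ℤ × ℤ) < ⊤ ∧
    ¬ (∀ h : ℤ × ℤ → ℝ, LocallyIntegrableBall μ h →
        μ {x | centeredMaximal μ h x = ⊤} = 0 ∨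
          {x | centeredMaximal μ h x = ⊤} = Set.univ) := by
  subst hμ hg
  exact Statement15Aux.mainthm
end

section
/- Consider ℤ² with the supremum metric d_∞ and the measure μ defined by μ(n,m) = 4^{|m|} if n = 0; μ(n,m) = 2^{n²} if n < 0 and m = 0; and μ(n,m) = 1 otherwise. Let f(n,m) = 2^n if n > 0 and m = 0, and f(n,m) = 0 otherwise. Then the non-centered maximal function satisfies Mf(1,0) = ∞ and Mf(−1,0) < ∞; consequently the non-centered maximal operator M associated with this space does not possess the dichotomy property. -/
open MeasureTheory Metric Filter Set ENNReal

noncomputable def Wd : ℤ × ℤ → ℝ≥0∞ := fun p =>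
  if p.1 = 0 then (4 : ℝ≥0∞) ^ p.2.natAbs
  else if p.1 < 0 ∧ p.2 = 0 then (2 : ℝ≥0∞) ^ (p.1 ^ 2).toNat
  else 1

noncomputable def Fd : ℤ × ℤ → ℝ :=
  fun p : ℤ × ℤ => if 0 < p.1 ∧ p.2 = 0 then (2 : ℝ) ^ p.1.toNat else 0

lemma ballZZ_eq (a b : ℤ) (r : ℝ) :
    (Metric.ball ((a, b) : ℤ × ℤ) r : Set (ℤ × ℤ)) =
      ↑(Finset.Ioo (a - ⌈r⌉) (a + ⌈r⌉) ×ˢ Finset.Ioo (b - ⌈r⌉) (b + ⌈r⌉)) := by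
  ext ⟨n, m⟩
  simp only [Metric.mem_ball, Prod.dist_eq, Int.dist_eq, Finset.coe_product, Set.mem_prod,
    Finset.mem_coe, Finset.mem_Ioo, max_lt_iff]
  have h1 : (|(n : ℝ) - a| < r) ↔ (a - ⌈r⌉ < n ∧ n < a + ⌈r⌉) := by
    rw [show |(n:ℝ) - a| = ((|n - a| : ℤ) : ℝ) by push_cast; rfl, ← Int.lt_ceil, abs_lt]
    omega
  have h2 : (|(m : ℝ) - b| < r) ↔ (b - ⌈r⌉ < m ∧ m < b + ⌈r⌉) := by
    rw [show |(m:ℝ) - b| = ((|m - b| : ℤ) : ℝ) by push_cast; rfl, ← Int.lt_ceil, abs_lt]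
    omega
  rw [h1, h2]

lemma lint_finset (g : ℤ × ℤ → ℝ≥0∞) (s : Finset (ℤ × ℤ)) :
    ∫⁻ p in (↑s : Set (ℤ × ℤ)), g p ∂(Measure.count.withDensity Wd) = ∑ p ∈ s, g p * Wd p := by
  rw [setLIntegral_withDensity_eq_setLIntegral_mul _ (measurable_of_countable _)
    (measurable_of_countable _) (s.countable_toSet.measurableSet), lintegral_finset]
  simp [Measure.count_singleton, mul_comm]

lemma meas_finset (s : Finset (ℤ × ℤ)) :
    (Measure.count.withDensity Wd) (↑s : Set (ℤ × ℤ)) = ∑ p ∈ s, Wd p := by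
  rw [withDensity_apply _ (s.countable_toSet.measurableSet), lintegral_finset]
  simp [Measure.count_singleton]

lemma meas_singleton (q : ℤ × ℤ) :
    (Measure.count.withDensity Wd) {q} = Wd q := by
  rw [show ({q} : Set (ℤ × ℤ)) = ↑({q} : Finset (ℤ × ℤ)) by simp, meas_finset,
    Finset.sum_singleton]

lemma term_eq (p : ℤ × ℤ) :
    ENNReal.ofReal |Fd p| * Wd p
      = if 0 < p.1 ∧ p.2 = 0 then (2 : ℝ≥0∞) ^ p.1.toNat else 0 := by
  obtain ⟨n, m⟩ := p
  by_cases h : 0 < n ∧ m = 0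
  · have hn0 : ¬ (n = 0) := by omega
    have hn1 : ¬ (n < 0 ∧ m = 0) := by omega
    simp only [Fd, Wd]
    rw [if_pos h, if_neg hn0, if_neg hn1, mul_one, if_pos h,
      abs_of_nonneg (by positivity : (0:ℝ) ≤ (2:ℝ) ^ n.toNat),
      ENNReal.ofReal_pow (by norm_num)]
    norm_num
  · simp [Fd, h]

lemma F_integral (s : Finset (ℤ × ℤ)) :
    ∫⁻ p in (↑s : Set (ℤ × ℤ)), ENNReal.ofReal |Fd p| ∂(Measure.count.withDensity Wd)
      = ∑ p ∈ s, (if 0 < p.1 ∧ p.2 = 0 then (2 : ℝ≥0∞) ^ p.1.toNat else 0) := by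
  rw [lint_finset]
  exact Finset.sum_congr rfl fun p _ => term_eq p

lemma geomZ : ∀ N : ℕ, (∑ n ∈ Finset.Ioo (0:ℤ) (N:ℤ), (2:ℝ≥0∞) ^ n.toNat) ≤ 2 ^ N := by
  intro N
  induction N with
  | zero => simp
  | succ N ih =>
    rcases Nat.eq_zero_or_pos N with h | h
    · subst h
      rw [show Finset.Ioo (0:ℤ) ((1:ℕ):ℤ) = ∅ by decide]
      simp
    · have hins : Finset.Ioo (0:ℤ) ((N+1:ℕ):ℤ) = insert (N:ℤ) (Finset.Ioo (0:ℤ) (N:ℤ)) := by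
        ext x
        simp only [Finset.mem_Ioo, Finset.mem_insert]
        omega
      rw [hins, Finset.sum_insert (by simp)]
      calc (2:ℝ≥0∞) ^ ((N:ℤ).toNat) + ∑ n ∈ Finset.Ioo (0:ℤ) (N:ℤ), (2:ℝ≥0∞) ^ n.toNat
          ≤ 2 ^ N + 2 ^ N := by
            rw [Int.toNat_natCast]
            exact add_le_add le_rfl ih
        _ = 2 ^ (N + 1) := by ring

lemma natIneq (n : ℕ) : n * ((4*n+9) * (4*n+9)) ≤ 2^(4*n+9) := by
  have h1 : n + 1 ≤ 2 ^ n := Nat.lt_two_pow_self (n := n)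
  have h2 : 4*n+9 ≤ 2^(n+4) := by
    calc 4*n+9 ≤ 16*(n+1) := by omega
      _ ≤ 16 * 2^n := Nat.mul_le_mul_left 16 h1
      _ = 2^(n+4) := by rw [pow_add]; ring
  calc n * ((4*n+9) * (4*n+9)) ≤ 2^n * (2^(n+4) * 2^(n+4)) :=
        Nat.mul_le_mul (Nat.le_of_lt (Nat.lt_two_pow_self (n := n))) (Nat.mul_le_mul h2 h2)
    _ = 2^(3*n+8) := by rw [← pow_add, ← pow_add]; ring_nf
    _ ≤ 2^(4*n+9) := Nat.pow_le_pow_right (by norm_num) (by omega)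

lemma part1 :
    noncenteredMaximal (Measure.count.withDensity Wd) Fd ((1, 0) : ℤ × ℤ) = ⊤ := by
  have key : ∀ n : ℕ,
      (n : ℝ≥0∞) ≤ noncenteredMaximal (Measure.count.withDensity Wd) Fd ((1, 0) : ℤ × ℤ) := by
    intro n
    set k : ℕ := 2*n+5 with hk
    have hr : (0:ℝ) < (k:ℝ) := by positivity
    have hball := ballZZ_eq (k:ℤ) 0 (k:ℝ)
    rw [Int.ceil_natCast] at hball
    rw [show (k:ℤ) - k = 0 by ring, show (k:ℤ) + k = 2*(k:ℤ) by ring,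
      show (0:ℤ) - k = -(k:ℤ) by ring, show (0:ℤ) + k = (k:ℤ) by ring] at hball
    set T : Finset (ℤ × ℤ) := Finset.Ioo (0:ℤ) (2*(k:ℤ)) ×ˢ Finset.Ioo (-(k:ℤ)) (k:ℤ) with hT
    have hmem : ((1, 0) : ℤ × ℤ) ∈ Metric.ball (((k:ℤ), (0:ℤ)) : ℤ × ℤ) (k:ℝ) := by
      rw [hball]
      simp only [hT, Finset.mem_coe, Finset.mem_product, Finset.mem_Ioo]
      refine ⟨⟨by omega, by omega⟩, by omega, by omega⟩
    -- numerator lower bound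
    have hNum : (2:ℝ≥0∞)^(2*k-1) ≤
        ∫⁻ p in Metric.ball (((k:ℤ), (0:ℤ)) : ℤ × ℤ) (k:ℝ),
          ENNReal.ofReal |Fd p| ∂(Measure.count.withDensity Wd) := by
      have hsub : ({((2*(k:ℤ)-1 :ℤ), (0:ℤ))} : Set (ℤ × ℤ)) ⊆
          Metric.ball (((k:ℤ), (0:ℤ)) : ℤ × ℤ) (k:ℝ) := by
        rw [hball, Set.singleton_subset_iff]
        simp only [hT, Finset.mem_coe, Finset.mem_product, Finset.mem_Ioo]
        refine ⟨⟨by omega, by omega⟩, by omega, by omega⟩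
      refine le_trans (le_of_eq ?_) (lintegral_mono_set hsub)
      rw [show ({((2*(k:ℤ)-1 :ℤ), (0:ℤ))} : Set (ℤ × ℤ))
          = ↑({((2*(k:ℤ)-1 :ℤ), (0:ℤ))} : Finset (ℤ × ℤ)) by simp,
        F_integral, Finset.sum_singleton]
      rw [if_pos (by constructor <;> [omega; rfl])]
      congr 1
      omega
    -- measure of the ball
    have hD : (Measure.count.withDensity Wd) (Metric.ball (((k:ℤ), (0:ℤ)) : ℤ × ℤ) (k:ℝ))
        = (((2*k-1) * (2*k-1) : ℕ) : ℝ≥0∞) := by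
      rw [hball, meas_finset]
      have hW1 : ∀ p ∈ T, Wd p = 1 := by
        rintro ⟨x, y⟩ hp
        rw [hT, Finset.mem_product, Finset.mem_Ioo, Finset.mem_Ioo] at hp
        simp only [Wd]
        rw [if_neg (by omega), if_neg (by push_neg; intro h; omega)]
      rw [Finset.sum_congr rfl hW1, Finset.sum_const, hT, Finset.card_product,
        Int.card_Ioo, Int.card_Ioo]
      rw [show (2*(k:ℤ) - 0 - 1).toNat = 2*k-1 by omega,
        show ((k:ℤ) - -(k:ℤ) - 1).toNat = 2*k-1 by omega]
      simp [nsmul_eq_mul]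
    -- cast arithmetic
    have hDne0 : (((2*k-1) * (2*k-1) : ℕ) : ℝ≥0∞) ≠ 0 := by
      exact_mod_cast Nat.cast_ne_zero.mpr (by positivity)
    have hDnetop : (((2*k-1) * (2*k-1) : ℕ) : ℝ≥0∞) ≠ ⊤ := ENNReal.natCast_ne_top _
    have hcast : (n : ℝ≥0∞) * (((2*k-1) * (2*k-1) : ℕ) : ℝ≥0∞) ≤ (2:ℝ≥0∞)^(2*k-1) := by
      have hnat : n * ((2*k-1) * (2*k-1)) ≤ 2^(2*k-1) := by
        rw [show 2*k-1 = 4*n+9 by omega]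
        exact natIneq n
      calc (n : ℝ≥0∞) * (((2*k-1) * (2*k-1) : ℕ) : ℝ≥0∞)
          = ((n * ((2*k-1) * (2*k-1)) : ℕ) : ℝ≥0∞) := by push_cast; ring
        _ ≤ ((2^(2*k-1) : ℕ) : ℝ≥0∞) := by exact_mod_cast hnat
        _ = (2:ℝ≥0∞)^(2*k-1) := by push_cast; ring
    have hratio : (n : ℝ≥0∞) ≤
        (∫⁻ p in Metric.ball (((k:ℤ), (0:ℤ)) : ℤ × ℤ) (k:ℝ),
          ENNReal.ofReal |Fd p| ∂(Measure.count.withDensity Wd)) /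
        (Measure.count.withDensity Wd) (Metric.ball (((k:ℤ), (0:ℤ)) : ℤ × ℤ) (k:ℝ)) := by
      rw [hD, ENNReal.le_div_iff_mul_le (Or.inl hDne0) (Or.inl hDnetop)]
      exact le_trans hcast hNum
    refine le_trans hratio ?_
    unfold noncenteredMaximal
    exact le_iSup_of_le (((k:ℤ), (0:ℤ)) : ℤ × ℤ)
      (le_iSup_of_le (k:ℝ) (le_iSup_of_le hr (le_iSup_of_le hmem le_rfl)))
  by_contra h
  obtain ⟨n, hn⟩ := ENNReal.exists_nat_gt h
  exact absurd (key n) (not_le.mpr hn)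

lemma part2 :
    noncenteredMaximal (Measure.count.withDensity Wd) Fd ((-1, 0) : ℤ × ℤ) ≤ 1 := by
  unfold noncenteredMaximal
  refine iSup_le fun c => iSup_le fun r => iSup_le fun hr => iSup_le fun hx => ?_
  obtain ⟨a, b⟩ := c
  set R : ℤ := ⌈r⌉ with hRdef
  have hR1 : 0 < R := Int.ceil_pos.mpr hr
  set K : ℕ := R.toNat with hKdef
  have hKR : (K:ℤ) = R := Int.toNat_of_nonneg (by omega)
  rw [ballZZ_eq] at hx ⊢
  rw [Finset.mem_coe, Finset.mem_product, Finset.mem_Ioo, Finset.mem_Ioo] at hx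
  obtain ⟨⟨ha1, ha2⟩, hb1, hb2⟩ := hx
  rw [F_integral]
  -- numerator bound
  have hNum : (∑ p ∈ Finset.Ioo (a-R) (a+R) ×ˢ Finset.Ioo (b-R) (b+R),
      (if 0 < p.1 ∧ p.2 = 0 then (2:ℝ≥0∞) ^ p.1.toNat else 0)) ≤ 2^(2*K-2) := by
    rw [Finset.sum_product]
    calc ∑ n ∈ Finset.Ioo (a-R) (a+R), ∑ m ∈ Finset.Ioo (b-R) (b+R),
          (if 0 < n ∧ m = 0 then (2:ℝ≥0∞) ^ n.toNat else 0)
        ≤ ∑ n ∈ Finset.Ioo (a-R) (a+R), (if 0 < n then (2:ℝ≥0∞) ^ n.toNat else 0) := by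
          refine Finset.sum_le_sum fun n _ => ?_
          by_cases hn : 0 < n
          · simp only [hn, true_and, if_true]
            rw [Finset.sum_ite_eq' (Finset.Ioo (b-R) (b+R)) (0:ℤ)
              (fun _ => (2:ℝ≥0∞) ^ n.toNat)]
            split <;> simp
          · simp [hn]
      _ = ∑ n ∈ (Finset.Ioo (a-R) (a+R)).filter (fun n => 0 < n), (2:ℝ≥0∞) ^ n.toNat :=
          (Finset.sum_filter _ _).symm
      _ ≤ ∑ n ∈ Finset.Ioo (0:ℤ) ((2*K-2:ℕ):ℤ), (2:ℝ≥0∞) ^ n.toNat := by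
          refine Finset.sum_le_sum_of_subset ?_
          intro x hx'
          rw [Finset.mem_filter, Finset.mem_Ioo] at hx'
          rw [Finset.mem_Ioo]
          omega
      _ ≤ 2^(2*K-2) := geomZ _
  by_cases hcase : 0 < a + R
  · -- denominator bound
    set m₀ : ℤ := if 0 ≤ b then b + R - 1 else b - R + 1 with hm
    have hm₀ : b - R < m₀ ∧ m₀ < b + R := by
      by_cases hb0 : 0 ≤ b
      · rw [hm, if_pos hb0]; omega
      · rw [hm, if_neg hb0]; omega
    have habs : K - 1 ≤ m₀.natAbs := by
      by_cases hb0 : 0 ≤ b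
      · rw [hm, if_pos hb0]; omega
      · rw [hm, if_neg hb0]; omega
    have hDen : (2:ℝ≥0∞)^(2*K-2) ≤
        (Measure.count.withDensity Wd)
          ↑(Finset.Ioo (a-R) (a+R) ×ˢ Finset.Ioo (b-R) (b+R)) := by
      have hsub : ({((0:ℤ), m₀)} : Set (ℤ × ℤ)) ⊆
          ↑(Finset.Ioo (a-R) (a+R) ×ˢ Finset.Ioo (b-R) (b+R)) := by
        rw [Set.singleton_subset_iff]
        rw [Finset.mem_coe, Finset.mem_product, Finset.mem_Ioo, Finset.mem_Ioo]
        exact ⟨⟨by omega, by omega⟩, hm₀.1, hm₀.2⟩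
      calc (2:ℝ≥0∞)^(2*K-2) = (4:ℝ≥0∞)^(K-1) := by
            rw [show (4:ℝ≥0∞) = 2^2 by norm_num, ← pow_mul]
            congr 1
            omega
        _ ≤ (4:ℝ≥0∞)^(m₀.natAbs) := pow_le_pow_right₀ (by norm_num) habs
        _ = (Measure.count.withDensity Wd) {((0:ℤ), m₀)} := by
            rw [meas_singleton]
            simp [Wd]
        _ ≤ _ := measure_mono hsub
    calc _ ≤ (2:ℝ≥0∞)^(2*K-2) / (2:ℝ≥0∞)^(2*K-2) := ENNReal.div_le_div hNum hDen
      _ = 1 := ENNReal.div_self (by positivity) (by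
          exact ENNReal.pow_ne_top ENNReal.ofNat_ne_top)
  · -- no positive column: numerator is zero
    have hzero : (∑ p ∈ Finset.Ioo (a-R) (a+R) ×ˢ Finset.Ioo (b-R) (b+R),
        (if 0 < p.1 ∧ p.2 = 0 then (2:ℝ≥0∞) ^ p.1.toNat else 0)) = 0 := by
      refine Finset.sum_eq_zero fun p hp => ?_
      rw [Finset.mem_product, Finset.mem_Ioo, Finset.mem_Ioo] at hp
      rw [if_neg]
      push_neg
      intro h
      omega
    rw [hzero, ENNReal.zero_div]
    exact zero_le_one

/-- On `ℤ²` with the supremum metric and measure with point weights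
`μ(n,m) = 4^{|m|}` if `n = 0`, `μ(n,m) = 2^{n²}` if `n < 0, m = 0`, and `1` otherwise,
for `f(n,m) = 2^n` if `n > 0, m = 0` and `0` otherwise, one has `Mf(1,0) = ∞` and
`Mf(−1,0) < ∞`; consequently the non-centered maximal operator does not possess the
dichotomy property. -/
theorem noncenteredMaximal_no_dichotomy_example4 (μ : Measure (ℤ × ℤ))
    (hμ : μ = Measure.count.withDensity
      (fun p : ℤ × ℤ =>
        if p.1 = 0 then (4 : ℝ≥0∞) ^ p.2.natAbs
        else if p.1 < 0 ∧ p.2 = 0 then (2 : ℝ≥0∞) ^ (p.1 ^ 2).toNat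
        else 1))
    (f : ℤ × ℤ → ℝ)
    (hf : f = fun p : ℤ × ℤ => if 0 < p.1 ∧ p.2 = 0 then (2 : ℝ) ^ p.1.toNat else 0) :
    noncenteredMaximal μ f ((1, 0) : ℤ × ℤ) = ⊤ ∧
    noncenteredMaximal μ f ((-1, 0) : ℤ × ℤ) < ⊤ ∧
    ¬ (∀ g : ℤ × ℤ → ℝ, LocallyIntegrableBall μ g →
        μ {x | noncenteredMaximal μ g x = ⊤} = 0 ∨
          {x | noncenteredMaximal μ g x = ⊤} = Set.univ) := by
  have hμ' : μ = Measure.count.withDensity Wd := hμ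
  have hf' : f = Fd := hf
  subst hμ' hf'
  have hlt : noncenteredMaximal (Measure.count.withDensity Wd) Fd ((-1, 0) : ℤ × ℤ) < ⊤ :=
    lt_of_le_of_lt part2 one_lt_top
  refine ⟨part1, hlt, ?_⟩
  intro H
  have hloc : LocallyIntegrableBall (Measure.count.withDensity Wd) Fd := by
    intro c r hr
    obtain ⟨a, b⟩ := c
    rw [ballZZ_eq, F_integral]
    refine ENNReal.sum_lt_top.mpr fun p _ => ?_
    split
    · exact ENNReal.pow_lt_top ENNReal.ofNat_lt_top
    · simp
  rcases H Fd hloc with h0 | huniv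
  · have hsub : ({((1:ℤ), (0:ℤ))} : Set (ℤ × ℤ)) ⊆
        {x | noncenteredMaximal (Measure.count.withDensity Wd) Fd x = ⊤} := by
      rw [Set.singleton_subset_iff]
      exact part1
    have h1 := measure_mono (μ := Measure.count.withDensity Wd) hsub
    rw [meas_singleton, h0] at h1
    have hW : Wd ((1:ℤ), (0:ℤ)) = 1 := by simp [Wd]
    rw [hW] at h1
    exact absurd h1 (by norm_num)
  · have : ((-1:ℤ), (0:ℤ)) ∈
        {x | noncenteredMaximal (Measure.count.withDensity Wd) Fd x = ⊤} := by
      rw [huniv]; exact Set.mem_univ _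
    exact absurd this hlt.ne
end

section
/- On ℝ² with the Euclidean metric, let μ = λ₁ + λ₂, where λ₁ is one-dimensional Lebesgue measure on the segment A = [0,1] × {0} (the pushforward of Lebesgue measure on [0,1] under x ↦ (x,0)) and λ₂ is two-dimensional Lebesgue measure. For n ≥ 1 let S_n = [0,1] × (2^{−n²}, 2^{−n²+1}) and f = Σ_{n=1}^{∞} 2^n χ_{S_n}. Then f ∈ L¹(μ) with ‖f‖_{L¹(μ)} ≤ 2, f has compact support, and the non-centered maximal function satisfies Mf(x₀, 0) = ∞ for every x₀ ∈ [0,1]. -/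
open MeasureTheory Metric Filter Set ENNReal

namespace MaxAux

lemma measurable_proj (i : Fin 2) : Measurable fun p : EuclideanSpace ℝ (Fin 2) => p i :=
  (measurable_pi_apply i).comp (MeasurableEquiv.toLp 2 (Fin 2 → ℝ)).symm.measurable

lemma vol_prod {A B : Set ℝ} (hA : MeasurableSet A) (hB : MeasurableSet B) :
    volume {p : EuclideanSpace ℝ (Fin 2) | p 0 ∈ A ∧ p 1 ∈ B} = volume A * volume B := by
  have hmp := EuclideanSpace.volume_preserving_symm_measurableEquiv_toLp (Fin 2)
  have hset : {p : EuclideanSpace ℝ (Fin 2) | p 0 ∈ A ∧ p 1 ∈ B} =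
      ((MeasurableEquiv.toLp 2 (Fin 2 → ℝ)).symm) ⁻¹' (Set.univ.pi ![A, B]) := by
    ext p
    simp [Set.mem_pi, Fin.forall_fin_two]
  have hms : MeasurableSet (Set.univ.pi ![A, B]) := by
    apply MeasurableSet.univ_pi
    intro i; fin_cases i <;> simpa
  rw [hset, hmp.measure_preimage hms.nullMeasurableSet, volume_pi_pi]
  simp [Fin.prod_univ_two]

lemma dist_eq2 (p q : EuclideanSpace ℝ (Fin 2)) :
    dist p q = Real.sqrt ((p 0 - q 0)^2 + (p 1 - q 1)^2) := by
  rw [EuclideanSpace.dist_eq]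
  simp [Fin.sum_univ_two, Real.dist_eq, sq_abs]

lemma ofReal_tsum_le (g : ℕ → ℝ) (hg : ∀ n, 0 ≤ g n) :
    ENNReal.ofReal (∑' n, g n) ≤ ∑' n, ENNReal.ofReal (g n) := by
  by_cases hs : Summable g
  · exact le_of_eq (ENNReal.ofReal_tsum_of_nonneg hg hs)
  · rw [tsum_eq_zero_of_not_summable hs]
    simp

end MaxAux

open MaxAux in
set_option maxHeartbeats 1000000 in
/-- On `ℝ²` with `μ = λ₁ + λ₂`, where `λ₁` is `1`-dimensional Lebesgue
measure on the segment `A = [0,1] × {0}` (the pushforward of Lebesgue measure on `[0,1]`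
under `x ↦ (x,0)`) and `λ₂` is `2`-dimensional Lebesgue measure, the function
`f = Σ_{n≥1} 2^n χ_{S_n}` with `S_n = [0,1] × (2^{−n²}, 2^{−n²+1})` satisfies
`‖f‖_{L¹(μ)} ≤ 2`, has compact support, and `Mf(x₀,0) = ∞` for every `x₀ ∈ [0,1]`. -/
theorem maximal_infinite_on_segment
    (e : ℝ → EuclideanSpace ℝ (Fin 2)) (he : e = fun x => (WithLp.toLp 2 ![x, 0] : EuclideanSpace ℝ (Fin 2)))
    (μ : Measure (EuclideanSpace ℝ (Fin 2)))
    (hμ : μ = Measure.map e (volume.restrict (Set.Icc (0:ℝ) 1)) + volume)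
    (S : ℕ → Set (EuclideanSpace ℝ (Fin 2)))
    (hS : S = fun n : ℕ => {p : EuclideanSpace ℝ (Fin 2) | p 0 ∈ Set.Icc (0:ℝ) 1 ∧
      p 1 ∈ Set.Ioo ((2:ℝ) ^ (-(n:ℤ)^2)) ((2:ℝ) ^ (-(n:ℤ)^2 + 1))})
    (f : EuclideanSpace ℝ (Fin 2) → ℝ)
    (hf : f = fun p => ∑' n : ℕ, Set.indicator (S (n+1)) (fun _ => (2:ℝ) ^ (n+1)) p) :
    (∫⁻ p, ENNReal.ofReal |f p| ∂μ) ≤ 2 ∧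
    HasCompactSupport f ∧
    ∀ x₀ ∈ Set.Icc (0:ℝ) 1, noncenteredMaximal μ f (e x₀) = ⊤ := by
  -- basic facts
  have hem : Measurable e := by
    rw [he]
    apply (MeasurableEquiv.toLp 2 (Fin 2 → ℝ)).measurable.comp
    apply measurable_pi_lambda
    rw [Fin.forall_fin_two]
    constructor
    · simp only [Matrix.cons_val_zero]; exact measurable_id
    · simp only [Matrix.cons_val_one, Matrix.head_cons]; exact measurable_const
  have he0 : ∀ x, e x 0 = x := by intro x; rw [he]; simp
  have he1 : ∀ x, e x 1 = 0 := by intro x; rw [he]; simp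
  have hSmeas : ∀ m : ℕ, MeasurableSet (S m) := by
    intro m
    rw [hS]
    exact ((measurable_proj 0) measurableSet_Icc).inter ((measurable_proj 1) measurableSet_Ioo)
  have hzpos : ∀ k : ℤ, (0:ℝ) < 2 ^ k := fun k => zpow_pos (by norm_num) k
  -- μ (S m)
  have hμS : ∀ m : ℕ, μ (S m) = ENNReal.ofReal ((2:ℝ) ^ (-(m:ℤ)^2)) := by
    intro m
    rw [hμ, Measure.add_apply]
    have hpre : e ⁻¹' (S m) = ∅ := by
      ext x
      simp only [Set.mem_preimage, Set.mem_empty_iff_false, iff_false, hS]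
      intro hx
      have h2 := hx.2.1
      rw [he1] at h2
      exact absurd h2 (not_lt.2 (hzpos _).le)
    rw [Measure.map_apply hem (hSmeas m), hpre]
    simp only [measure_empty, zero_add]
    rw [hS]
    rw [vol_prod measurableSet_Icc measurableSet_Ioo, Real.volume_Icc, Real.volume_Ioo]
    have hdiff : (2:ℝ) ^ (-(m:ℤ)^2 + 1) - 2 ^ (-(m:ℤ)^2) = 2 ^ (-(m:ℤ)^2) := by
      rw [zpow_add₀ (two_ne_zero), zpow_one]
      ring
    rw [hdiff]
    norm_num
  -- disjointness of the S's
  have hdisj : ∀ a b : ℕ, a < b → ∀ p : EuclideanSpace ℝ (Fin 2),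
      p ∈ S (a+1) → p ∉ S (b+1) := by
    intro a b hab p hpa hpb
    rw [hS] at hpa hpb
    have h1 : (2:ℝ) ^ (-((a+1:ℕ):ℤ)^2) < p 1 := hpa.2.1
    have h2 : p 1 < (2:ℝ) ^ (-((b+1:ℕ):ℤ)^2 + 1) := hpb.2.2
    have hle : (2:ℝ) ^ (-((b+1:ℕ):ℤ)^2 + 1) ≤ 2 ^ (-((a+1:ℕ):ℤ)^2) := by
      apply zpow_le_zpow_right₀ (by norm_num)
      push_cast
      nlinarith [Int.ofNat_le.2 (Nat.succ_le_of_lt hab), Int.natCast_nonneg a, Int.natCast_nonneg b]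
    linarith
  -- f = 2^(m+1) on S (m+1)
  have hfS : ∀ m : ℕ, ∀ p ∈ S (m+1), f p = (2:ℝ) ^ (m+1) := by
    intro m p hp
    simp only [hf]
    rw [tsum_eq_single m ?_]
    · exact Set.indicator_of_mem hp _
    · intro n hn
      apply Set.indicator_of_notMem
      rcases hn.lt_or_gt with h | h
      · intro hpn; exact hdisj n m h p hpn hp
      · intro hpn; exact hdisj m n h p hp hpn
  refine ⟨?_, ?_, ?_⟩
  · -- L¹ bound
    have key : ∀ p : EuclideanSpace ℝ (Fin 2), ENNReal.ofReal |f p| ≤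
        ∑' n : ℕ, Set.indicator (S (n+1)) (fun _ => ENNReal.ofReal ((2:ℝ)^(n+1))) p := by
      intro p
      have hnn : ∀ n : ℕ, 0 ≤ Set.indicator (S (n+1)) (fun _ => (2:ℝ)^(n+1)) p :=
        fun n => Set.indicator_nonneg (fun _ _ => by positivity) _
      rw [hf, abs_of_nonneg (tsum_nonneg hnn)]
      refine le_trans (ofReal_tsum_le _ hnn) ?_
      refine le_of_eq (tsum_congr ?_)
      intro n
      by_cases hpn : p ∈ S (n+1) <;> simp [hpn]
    calc ∫⁻ p, ENNReal.ofReal |f p| ∂μ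
        ≤ ∫⁻ p, ∑' n : ℕ, Set.indicator (S (n+1)) (fun _ => ENNReal.ofReal ((2:ℝ)^(n+1))) p ∂μ :=
          lintegral_mono key
      _ = ∑' n : ℕ, ∫⁻ p, Set.indicator (S (n+1)) (fun _ => ENNReal.ofReal ((2:ℝ)^(n+1))) p ∂μ :=
          lintegral_tsum (fun n => (measurable_const.indicator (hSmeas (n+1))).aemeasurable)
      _ = ∑' n : ℕ, ENNReal.ofReal ((2:ℝ)^(n+1)) * μ (S (n+1)) := by
          refine tsum_congr fun n => ?_
          rw [lintegral_indicator_const (hSmeas (n+1))]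
      _ = ∑' n : ℕ, ENNReal.ofReal ((2:ℝ)^(n+1) * 2 ^ (-((n+1:ℕ):ℤ)^2)) := by
          refine tsum_congr fun n => ?_
          rw [hμS (n+1), ← ENNReal.ofReal_mul (by positivity)]
      _ ≤ ∑' n : ℕ, ENNReal.ofReal ((1/2:ℝ)^n) := by
          refine ENNReal.tsum_le_tsum fun n => ENNReal.ofReal_le_ofReal ?_
          have h1 : (2:ℝ)^(n+1) = (2:ℝ) ^ ((n+1:ℕ):ℤ) := by rw [zpow_natCast]
          have h2 : ((1:ℝ)/2)^n = (2:ℝ) ^ (-(n:ℤ)) := by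
            rw [zpow_neg, ← zpow_natCast]
            rw [one_div, inv_zpow]
          rw [h1, h2, ← zpow_add₀ (two_ne_zero)]
          apply zpow_le_zpow_right₀ (by norm_num)
          push_cast
          nlinarith [Int.natCast_nonneg n]
      _ = ENNReal.ofReal (∑' n : ℕ, (1/2:ℝ)^n) :=
          (ENNReal.ofReal_tsum_of_nonneg (fun n => by positivity)
            (summable_geometric_of_lt_one (by norm_num) (by norm_num))).symm
      _ ≤ 2 := by
          rw [tsum_geometric_of_lt_one (by norm_num) (by norm_num)]
          norm_num
  · -- compact support
    have hSsub : ∀ n : ℕ, S (n+1) ⊆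
        {p : EuclideanSpace ℝ (Fin 2) | p 0 ∈ Set.Icc (0:ℝ) 1 ∧ p 1 ∈ Set.Icc (0:ℝ) 1} := by
      intro n p hp
      rw [hS] at hp
      obtain ⟨h0, h1, h2⟩ := hp
      refine ⟨h0, (hzpos _).le.trans h1.le, h2.le.trans ?_⟩
      calc (2:ℝ) ^ (-((n+1:ℕ):ℤ)^2 + 1) ≤ 2 ^ (0:ℤ) := by
            apply zpow_le_zpow_right₀ (by norm_num)
            push_cast
            nlinarith [Int.natCast_nonneg n]
        _ = 1 := zpow_zero 2
    have hKc : IsCompact {p : EuclideanSpace ℝ (Fin 2) | p 0 ∈ Set.Icc (0:ℝ) 1 ∧ p 1 ∈ Set.Icc (0:ℝ) 1} := by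
      have hcl : IsClosed {p : EuclideanSpace ℝ (Fin 2) | p 0 ∈ Set.Icc (0:ℝ) 1 ∧ p 1 ∈ Set.Icc (0:ℝ) 1} := by
        have hcont : ∀ i : Fin 2, Continuous fun p : EuclideanSpace ℝ (Fin 2) => p i :=
          fun i => (EuclideanSpace.proj i : EuclideanSpace ℝ (Fin 2) →L[ℝ] ℝ).continuous
      
        exact (isClosed_Icc.preimage (hcont 0)).inter (isClosed_Icc.preimage (hcont 1))
      have hbd : Bornology.IsBounded {p : EuclideanSpace ℝ (Fin 2) | p 0 ∈ Set.Icc (0:ℝ) 1 ∧ p 1 ∈ Set.Icc (0:ℝ) 1} := by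
        apply Bornology.IsBounded.subset (Metric.isBounded_closedBall (x := (0 : EuclideanSpace ℝ (Fin 2))) (r := 2))
        intro p hp
        obtain ⟨⟨h00, h01⟩, h10, h11⟩ := hp
        rw [Metric.mem_closedBall, dist_eq2]
        have hz : (0 : EuclideanSpace ℝ (Fin 2)) 0 = 0 := rfl
        have hz1 : (0 : EuclideanSpace ℝ (Fin 2)) 1 = 0 := rfl
        rw [hz, hz1]
        have : Real.sqrt ((p 0 - 0)^2 + (p 1 - 0)^2) ≤ Real.sqrt 4 := by
          apply Real.sqrt_le_sqrt
          nlinarith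
        refine this.trans (le_of_eq ?_)
        rw [show (4:ℝ) = 2^2 by norm_num, Real.sqrt_sq (by norm_num)]
      exact Metric.isCompact_of_isClosed_isBounded hcl hbd
    apply HasCompactSupport.intro hKc
    intro p hp
    rw [hf]
    have hz : ∀ n : ℕ, Set.indicator (S (n+1)) (fun _ => (2:ℝ)^(n+1)) p = 0 :=
      fun n => Set.indicator_of_notMem (fun h => hp (hSsub n h)) _
    exact (tsum_congr hz).trans tsum_zero
  · -- maximal function infinite
    intro x₀ hx₀
    obtain ⟨hx0, hx1⟩ := hx₀
    have main : ∀ k : ℕ, ENNReal.ofReal ((2:ℝ)^(k+2) * (4/401)) ≤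
        noncenteredMaximal μ f (e x₀) := by
      intro k
      set m : ℕ := k + 2 with hm
      set h : ℝ := (2:ℝ) ^ (-(m:ℤ)^2) with hh
      have hh0 : 0 < h := hzpos _
      have hh16 : h ≤ 1/16 := by
        calc h ≤ (2:ℝ) ^ (-4:ℤ) := by
              apply zpow_le_zpow_right₀ (by norm_num)
              have : (4:ℤ) ≤ (m:ℤ)^2 := by
                push_cast [hm]
                nlinarith [Int.natCast_nonneg k]
              linarith
          _ = 1/16 := by norm_num
      set r : ℝ := 10 * h with hr
      set ε : ℝ := h^3 / 80 with hε
      have hr0 : (0:ℝ) < r := by positivity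
      have hε0 : (0:ℝ) < ε := by positivity
      have hsq : h^2 ≤ 1 := by nlinarith
      have hεh : ε ≤ h := by
        rw [hε]
        nlinarith [mul_le_of_le_one_left hh0.le hsq]
      have hεr : ε < r := by nlinarith
      set c : EuclideanSpace ℝ (Fin 2) := (WithLp.toLp 2 ![x₀, r - ε] : EuclideanSpace ℝ (Fin 2)) with hc
      have hc0 : c 0 = x₀ := rfl
      have hc1 : c 1 = r - ε := rfl
      -- membership of the point
      have hmem : e x₀ ∈ Metric.ball c r := by
        rw [Metric.mem_ball, dist_eq2, he0, he1, hc0, hc1, Real.sqrt_lt' hr0]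
        nlinarith
      -- upper bound on μ(ball)
      have hμB : μ (Metric.ball c r) ≤ ENNReal.ofReal (401 * h^2) := by
        rw [hμ, Measure.add_apply]
        have h1 : Measure.map e (volume.restrict (Set.Icc (0:ℝ) 1)) (Metric.ball c r)
            ≤ ENNReal.ofReal (h^2) := by
          rw [Measure.map_apply hem measurableSet_ball]
          have hkey0 : 2*r*ε - ε^2 ≤ (h^2/2)^2 := by
            have h2re : 2*r*ε = (h^2/2)^2 := by rw [hr, hε]; ring
            nlinarith [sq_nonneg ε]
          have hsub : e ⁻¹' Metric.ball c r ⊆ Set.Icc (x₀ - h^2/2) (x₀ + h^2/2) := by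
            intro x hx
            rw [Set.mem_preimage, Metric.mem_ball, dist_eq2, he0, he1, hc0, hc1,
              Real.sqrt_lt' hr0] at hx
            have key : (x - x₀)^2 < (h^2/2)^2 := by nlinarith [hkey0]
            constructor <;> nlinarith [key, pow_pos hh0 2]
          calc volume.restrict (Set.Icc (0:ℝ) 1) (e ⁻¹' Metric.ball c r)
              ≤ volume (e ⁻¹' Metric.ball c r) := Measure.restrict_le_self _
            _ ≤ volume (Set.Icc (x₀ - h^2/2) (x₀ + h^2/2)) := measure_mono hsub
            _ = ENNReal.ofReal (h^2) := by rw [Real.volume_Icc]; congr 1; ring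
        have h2 : volume (Metric.ball c r) ≤ ENNReal.ofReal (400 * h^2) := by
          have hsub : Metric.ball c r ⊆
              {p : EuclideanSpace ℝ (Fin 2) | p 0 ∈ Set.Icc (x₀ - r) (x₀ + r) ∧
                p 1 ∈ Set.Icc (r - ε - r) (r - ε + r)} := by
            intro p hp
            rw [Metric.mem_ball, dist_eq2, hc0, hc1, Real.sqrt_lt' hr0] at hp
            constructor <;> constructor <;>
              nlinarith [sq_nonneg (p 0 - x₀), sq_nonneg (p 1 - (r - ε)), hr0]
          calc volume (Metric.ball c r)
              ≤ volume {p : EuclideanSpace ℝ (Fin 2) | p 0 ∈ Set.Icc (x₀ - r) (x₀ + r) ∧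
                p 1 ∈ Set.Icc (r - ε - r) (r - ε + r)} := measure_mono hsub
            _ = volume (Set.Icc (x₀ - r) (x₀ + r)) * volume (Set.Icc (r - ε - r) (r - ε + r)) :=
                vol_prod measurableSet_Icc measurableSet_Icc
            _ = ENNReal.ofReal (400 * h^2) := by
                rw [Real.volume_Icc, Real.volume_Icc,
                  ← ENNReal.ofReal_mul (by linarith : (0:ℝ) ≤ x₀ + r - (x₀ - r))]
                congr 1
                ring
        calc Measure.map e (volume.restrict (Set.Icc (0:ℝ) 1)) (Metric.ball c r)
              + volume (Metric.ball c r)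
            ≤ ENNReal.ofReal (h^2) + ENNReal.ofReal (400 * h^2) := add_le_add h1 h2
          _ = ENNReal.ofReal (401 * h^2) := by
              rw [← ENNReal.ofReal_add (by positivity) (by positivity)]
              congr 1
              ring
      have hvolle : ∀ t : Set (EuclideanSpace ℝ (Fin 2)), volume t ≤ μ t := by
        intro t
        rw [hμ, Measure.add_apply]
        exact le_add_self
      have hμB0 : μ (Metric.ball c r) ≠ 0 :=
        (lt_of_lt_of_le (measure_ball_pos volume c hr0) (hvolle _)).ne'
      have hμBtop : μ (Metric.ball c r) ≠ ⊤ :=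
        ne_top_of_le_ne_top ENNReal.ofReal_ne_top hμB
      -- the rectangle R inside ball ∩ S m
      set a : ℝ := max 0 (min x₀ (1 - 4*h)) with ha
      have ha0 : 0 ≤ a := le_max_left _ _
      have ha1 : a ≤ 1 - 4*h := max_le (by linarith) (min_le_right _ _)
      have hax : a ≤ x₀ := max_le hx0 (min_le_left _ _)
      have hax' : x₀ - 4*h ≤ a := le_max_of_le_right (le_min (by linarith) (by linarith))
      set R : Set (EuclideanSpace ℝ (Fin 2)) :=
        {p : EuclideanSpace ℝ (Fin 2) | p 0 ∈ Set.Ioo a (a + 4*h) ∧ p 1 ∈ Set.Ioo h (2*h)}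
        with hR
      have hRmeas : MeasurableSet R :=
        ((measurable_proj 0) measurableSet_Ioo).inter ((measurable_proj 1) measurableSet_Ioo)
      have h2h : (2:ℝ) ^ (-(m:ℤ)^2 + 1) = 2 * h := by
        rw [zpow_add₀ (two_ne_zero), zpow_one, hh]
        ring
      have hRS : R ⊆ S m := by
        intro p hp
        obtain ⟨⟨hp1, hp2⟩, hp3, hp4⟩ := hp
        rw [hS]
        refine ⟨⟨by linarith, by linarith⟩, ?_, ?_⟩
        · rw [← hh]; exact hp3
        · rw [h2h]; exact hp4
      have hRB : R ⊆ Metric.ball c r := by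
        intro p hp
        obtain ⟨⟨hp1, hp2⟩, hp3, hp4⟩ := hp
        rw [Metric.mem_ball, dist_eq2, hc0, hc1, Real.sqrt_lt' hr0]
        have e1 : (p 0 - x₀)^2 ≤ (4*h)^2 := by nlinarith
        have e2 : (p 1 - (r - ε))^2 ≤ (9*h)^2 := by
          nlinarith [mul_nonneg (by linarith : (0:ℝ) ≤ 9*h - (p 1 - (r - ε)))
            (by linarith : (0:ℝ) ≤ 9*h + (p 1 - (r - ε)))]
        nlinarith [e1, e2, pow_pos hh0 2]
      have hfR : ∀ p ∈ R, ENNReal.ofReal |f p| = ENNReal.ofReal ((2:ℝ)^m) := by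
        intro p hp
        have : f p = (2:ℝ)^m := hfS (k+1) p (hRS hp)
        rw [this, abs_of_nonneg (by positivity)]
      have hvolR : volume R = ENNReal.ofReal (4*h) * ENNReal.ofReal h := by
        rw [hR, vol_prod measurableSet_Ioo measurableSet_Ioo, Real.volume_Ioo, Real.volume_Ioo]
        congr 1 <;> · congr 1; ring
      have hint : ENNReal.ofReal ((2:ℝ)^m) * (ENNReal.ofReal (4*h) * ENNReal.ofReal h)
          ≤ ∫⁻ y in Metric.ball c r, ENNReal.ofReal |f y| ∂μ := by
        calc ENNReal.ofReal ((2:ℝ)^m) * (ENNReal.ofReal (4*h) * ENNReal.ofReal h)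
            = ENNReal.ofReal ((2:ℝ)^m) * volume R := by rw [hvolR]
          _ ≤ ENNReal.ofReal ((2:ℝ)^m) * μ R := mul_le_mul_right (hvolle R) _
          _ = ∫⁻ y in R, ENNReal.ofReal ((2:ℝ)^m) ∂μ := (setLIntegral_const R _).symm
          _ = ∫⁻ y in R, ENNReal.ofReal |f y| ∂μ :=
              (setLIntegral_congr_fun hRmeas
                (fun p hp => (hfR p hp))).symm
          _ ≤ ∫⁻ y in Metric.ball c r, ENNReal.ofReal |f y| ∂μ := lintegral_mono_set hRB
      calc ENNReal.ofReal ((2:ℝ)^(k+2) * (4/401))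
          ≤ (∫⁻ y in Metric.ball c r, ENNReal.ofReal |f y| ∂μ) / μ (Metric.ball c r) := by
            rw [ENNReal.le_div_iff_mul_le (Or.inl hμB0) (Or.inl hμBtop)]
            calc ENNReal.ofReal ((2:ℝ)^(k+2) * (4/401)) * μ (Metric.ball c r)
                ≤ ENNReal.ofReal ((2:ℝ)^(k+2) * (4/401)) * ENNReal.ofReal (401 * h^2) :=
                  mul_le_mul_right hμB _
              _ = ENNReal.ofReal ((2:ℝ)^m) * (ENNReal.ofReal (4*h) * ENNReal.ofReal h) := by
                  rw [← ENNReal.ofReal_mul (by positivity), ← ENNReal.ofReal_mul (by positivity),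
                    ← ENNReal.ofReal_mul (by positivity)]
                  congr 1
                  rw [hm]
                  push_cast
                  ring
              _ ≤ _ := hint
        _ ≤ noncenteredMaximal μ f (e x₀) := by
            rw [noncenteredMaximal]
            exact le_iSup_of_le c (le_iSup_of_le r (le_iSup_of_le hr0
              (le_iSup_of_le hmem le_rfl)))
    rcases eq_or_ne (noncenteredMaximal μ f (e x₀)) ⊤ with htop | htop
    · exact htop
    exfalso
    have hb : ∀ k : ℕ, (2:ℝ)^(k+2) * (4/401) ≤ (noncenteredMaximal μ f (e x₀)).toReal :=
      fun k => (ENNReal.ofReal_le_iff_le_toReal htop).1 (main k)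
    obtain ⟨k, hk⟩ := pow_unbounded_of_one_lt
      ((noncenteredMaximal μ f (e x₀)).toReal * (401/4)) (one_lt_two (α := ℝ))
    have h42 : (2:ℝ)^(k+2) = 4 * 2^k := by rw [pow_add]; ring
    have := hb k
    nlinarith [pow_pos (zero_lt_two (α := ℝ)) k, ENNReal.toReal_nonneg
      (a := noncenteredMaximal μ f (e x₀))]
end

section
/- On ℝ² with the Euclidean metric, let μ = λ₁ + λ₂, where λ₁ is one-dimensional Lebesgue measure on the segment A = [0,1] × {0} (the pushforward of Lebesgue measure on [0,1] under x ↦ (x,0)) and λ₂ is two-dimensional Lebesgue measure. For n ≥ 1 let S_n = [0,1] × (2^{−n²}, 2^{−n²+1}) and f = Σ_{n=1}^{∞} 2^n χ_{S_n}. Then the non-centered maximal function satisfies Mf(x₀, y₀) < ∞ for every point (x₀, y₀) ∉ A; consequently {x ∈ ℝ² : Mf(x) = ∞} = A. -/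
open MeasureTheory Metric Filter Set ENNReal

namespace Aux18
abbrev E := EuclideanSpace ℝ (Fin 2)

noncomputable def pt (a b : ℝ) : E := WithLp.toLp 2 ![a, b]
@[simp] lemma pt0 (a b : ℝ) : pt a b 0 = a := rfl
@[simp] lemma pt1 (a b : ℝ) : pt a b 1 = b := rfl

lemma dist_pt (a b c d : ℝ) : dist (pt a b) (pt c d) = Real.sqrt ((a-c)^2 + (b-d)^2) := by
  rw [EuclideanSpace.dist_eq, Fin.sum_univ_two]
  simp [Real.dist_eq, sq_abs]

lemma dist_pt' (q : E) (c d : ℝ) : dist q (pt c d) = Real.sqrt ((q 0 - c)^2 + (q 1 - d)^2) := by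
  rw [EuclideanSpace.dist_eq, Fin.sum_univ_two]
  simp [Real.dist_eq, sq_abs]

lemma coord_dist (x y : E) (i : Fin 2) : dist (x i) (y i) ≤ dist x y := by
  rw [EuclideanSpace.dist_eq]
  have h1 : dist (x i) (y i) = Real.sqrt (dist (x i) (y i) ^ 2) := by
    rw [Real.sqrt_sq dist_nonneg]
  rw [h1]
  apply Real.sqrt_le_sqrt
  exact Finset.single_le_sum (f := fun j => dist (x j) (y j) ^ 2)
    (fun j _ => sq_nonneg _) (Finset.mem_univ i)

lemma measurable_coord (i : Fin 2) : Measurable (fun p : E => p i) :=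
  ((continuous_apply i).comp (PiLp.continuous_ofLp 2 _)).measurable

lemma box_measurable {I J : Set ℝ} (hI : MeasurableSet I) (hJ : MeasurableSet J) :
    MeasurableSet {p : E | p 0 ∈ I ∧ p 1 ∈ J} :=
  ((measurable_coord 0) hI).inter ((measurable_coord 1) hJ)

lemma volume_box (I J : Set ℝ) (hI : MeasurableSet I) (hJ : MeasurableSet J) :
    volume {p : E | p 0 ∈ I ∧ p 1 ∈ J} = volume I * volume J := by
  have hmp := EuclideanSpace.volume_preserving_symm_measurableEquiv_toLp (Fin 2)
  have key : {p : E | p 0 ∈ I ∧ p 1 ∈ J}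
      = (MeasurableEquiv.toLp 2 (Fin 2 → ℝ)).symm ⁻¹' (univ.pi ![I, J]) := by
    ext p
    simp [Set.mem_pi, Fin.forall_fin_two, MeasurableEquiv.coe_toLp_symm]
  rw [key, hmp.measure_preimage]
  · rw [volume_pi_pi, Fin.prod_univ_two]
    simp
  · exact (MeasurableSet.univ_pi (by rw [Fin.forall_fin_two]; exact ⟨hI, hJ⟩)).nullMeasurableSet

def Sn (n : ℕ) : Set E := {p | p 0 ∈ Icc (0:ℝ) 1 ∧
    p 1 ∈ Ioo ((2:ℝ) ^ (-(n:ℤ)^2)) ((2:ℝ) ^ (-(n:ℤ)^2 + 1))}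

lemma Sn_measurable (n : ℕ) : MeasurableSet (Sn n) :=
  box_measurable measurableSet_Icc measurableSet_Ioo

lemma Sn_disj {m n : ℕ} (h : m < n) (p : E) (hm : p ∈ Sn (m+1)) : p ∉ Sn (n+1) := by
  intro hn
  have h1 := hm.2.1
  have h2 := hn.2.2
  have hle : (-((n:ℤ)+1)^2 + 1) ≤ -((m:ℤ)+1)^2 := by nlinarith [Int.ofNat_lt.mpr h]
  have := zpow_le_zpow_right₀ (by norm_num : (1:ℝ) ≤ 2) hle
  push_cast at h1 h2
  linarith

noncomputable def fA : E → ℝ :=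
  fun p => ∑' n : ℕ, Set.indicator (Sn (n+1)) (fun _ => (2:ℝ) ^ (n+1)) p
noncomputable def FA : E → ℝ≥0∞ :=
  fun p => ∑' n : ℕ, Set.indicator (Sn (n+1)) (fun _ => (2:ℝ≥0∞) ^ (n+1)) p

lemma Sn_unique {m n : ℕ} (p : E) (hm : p ∈ Sn (m+1)) (hn : p ∈ Sn (n+1)) : m = n := by
  rcases lt_trichotomy m n with h | h | h
  · exact absurd hn (Sn_disj h p hm)
  · exact h
  · exact absurd hm (Sn_disj h p hn)

lemma fA_val {n : ℕ} (p : E) (hn : p ∈ Sn (n+1)) : fA p = (2:ℝ) ^ (n+1) := by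
  unfold fA
  rw [tsum_eq_single n]
  · simp [Set.indicator_of_mem hn]
  · intro m hm
    exact Set.indicator_of_notMem (fun hmem => hm (Sn_unique p hmem hn)) _

lemma FA_val {n : ℕ} (p : E) (hn : p ∈ Sn (n+1)) : FA p = (2:ℝ≥0∞) ^ (n+1) := by
  unfold FA
  rw [tsum_eq_single n]
  · simp [Set.indicator_of_mem hn]
  · intro m hm
    exact Set.indicator_of_notMem (fun hmem => hm (Sn_unique p hmem hn)) _

lemma fA_zero (p : E) (h : ∀ n : ℕ, p ∉ Sn (n+1)) : fA p = 0 := by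
  unfold fA
  convert tsum_zero with n
  exact Set.indicator_of_notMem (h n) _

lemma FA_zero (p : E) (h : ∀ n : ℕ, p ∉ Sn (n+1)) : FA p = 0 := by
  unfold FA
  convert tsum_zero with n
  exact Set.indicator_of_notMem (h n) _

lemma ofReal_abs_fA (p : E) : ENNReal.ofReal |fA p| = FA p := by
  by_cases h : ∃ n : ℕ, p ∈ Sn (n+1)
  · obtain ⟨n, hn⟩ := h
    rw [fA_val p hn, FA_val p hn, abs_of_nonneg (by positivity)]
    rw [ENNReal.ofReal_pow (by norm_num)]
    norm_num
  · push_neg at h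
    rw [fA_zero p h, FA_zero p h]
    simp

lemma FA_measurable : Measurable FA :=
  Measurable.ennreal_tsum fun n => measurable_const.indicator (Sn_measurable (n+1))

lemma FA_ge (n : ℕ) (p : E) : Set.indicator (Sn (n+1)) (fun _ => (2:ℝ≥0∞)^(n+1)) p ≤ FA p :=
  ENNReal.le_tsum n

lemma volume_Sn (n : ℕ) : volume (Sn n) = ENNReal.ofReal ((2:ℝ)^(-(n:ℤ)^2)) := by
  unfold Sn
  rw [volume_box _ _ measurableSet_Icc measurableSet_Ioo]
  rw [Real.volume_Icc, Real.volume_Ioo]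
  have : (2:ℝ)^(-(n:ℤ)^2 + 1) - (2:ℝ)^(-(n:ℤ)^2) = (2:ℝ)^(-(n:ℤ)^2) := by
    rw [zpow_add₀ (by norm_num : (2:ℝ) ≠ 0)]
    ring
  rw [this]
  norm_num

lemma term_bound (n : ℕ) :
    (2:ℝ≥0∞)^(n+1) * ENNReal.ofReal ((2:ℝ)^(-((n:ℤ)+1)^2)) ≤ (2⁻¹ : ℝ≥0∞)^n := by
  have h1 : (2:ℝ≥0∞)^(n+1) = ENNReal.ofReal ((2:ℝ)^(n+1)) := by
    rw [ENNReal.ofReal_pow (by norm_num)]; norm_num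
  rw [h1, ← ENNReal.ofReal_mul (by positivity)]
  have h2 : (2:ℝ)^(n+1) * (2:ℝ)^(-((n:ℤ)+1)^2) = (2:ℝ)^(((n:ℤ)+1) - ((n:ℤ)+1)^2) := by
    rw [← zpow_natCast (2:ℝ) (n+1), ← zpow_add₀ (by norm_num : (2:ℝ) ≠ 0)]
    push_cast; ring_nf
  rw [h2]
  have h3 : ((n:ℤ)+1) - ((n:ℤ)+1)^2 ≤ -(n:ℤ) := by nlinarith [Int.ofNat_nonneg n]
  calc ENNReal.ofReal ((2:ℝ)^(((n:ℤ)+1) - ((n:ℤ)+1)^2))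
      ≤ ENNReal.ofReal ((2:ℝ)^(-(n:ℤ))) :=
        ENNReal.ofReal_le_ofReal (zpow_le_zpow_right₀ (by norm_num) h3)
    _ = (2⁻¹:ℝ≥0∞)^n := by
        rw [zpow_neg, ← inv_zpow, zpow_natCast, ENNReal.ofReal_pow (by norm_num)]
        rw [show ((2:ℝ)⁻¹) = (1:ℝ)/2 by norm_num, ENNReal.ofReal_div_of_pos (by norm_num)]; norm_num

lemma lintegral_FA_volume_lt_top : ∫⁻ p, FA p ∂(volume : Measure E) < ⊤ := by
  unfold FA
  rw [lintegral_tsum (fun n => (measurable_const.indicator (Sn_measurable (n+1))).aemeasurable)]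
  have hb : ∀ n : ℕ, (∫⁻ p, Set.indicator (Sn (n+1)) (fun _ => (2:ℝ≥0∞)^(n+1)) p ∂volume)
      ≤ (2⁻¹:ℝ≥0∞)^n := by
    intro n
    rw [lintegral_indicator (Sn_measurable (n+1)), setLIntegral_const, volume_Sn]
    have : (-((n+1:ℕ):ℤ)^2) = (-((n:ℤ)+1)^2) := by push_cast; ring
    rw [this]
    exact term_bound n
  calc ∑' n : ℕ, (∫⁻ p, Set.indicator (Sn (n+1)) (fun _ => (2:ℝ≥0∞)^(n+1)) p ∂volume)
      ≤ ∑' n : ℕ, (2⁻¹:ℝ≥0∞)^n := ENNReal.tsum_le_tsum hb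
    _ = (1 - 2⁻¹)⁻¹ := ENNReal.tsum_geometric _
    _ < ⊤ := by norm_num

noncomputable def eA : ℝ → E := fun x => WithLp.toLp 2 ![x, 0]

lemma eA_pt (x : ℝ) : eA x = pt x 0 := rfl

lemma eA_isometry : Isometry eA := by
  apply Isometry.of_dist_eq
  intro x y
  rw [eA_pt, eA_pt, dist_pt]
  simp [Real.dist_eq, Real.sqrt_sq_eq_abs]

lemma eA_measurable : Measurable eA := eA_isometry.continuous.measurable

lemma FA_eA (x : ℝ) : FA (eA x) = 0 := by
  apply FA_zero
  intro n hn
  have h1 := hn.2.1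
  have h0 : (0:ℝ) < (2:ℝ)^(-((n+1:ℕ):ℤ)^2) := by positivity
  have : eA x 1 = 0 := rfl
  rw [this] at h1
  linarith

end Aux18

namespace Aux18

noncomputable def muA : Measure E :=
  Measure.map eA (volume.restrict (Set.Icc (0:ℝ) 1)) + volume

def Acal : Set E := eA '' Set.Icc (0:ℝ) 1

lemma Acal_closed : IsClosed Acal :=
  ((isCompact_Icc).image eA_isometry.continuous).isClosed

lemma Acal_nonempty : Acal.Nonempty := ⟨eA 0, mem_image_of_mem _ (by norm_num)⟩

lemma lintegral_FA_muA_lt_top : ∫⁻ p, FA p ∂muA < ⊤ := by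
  unfold muA
  rw [lintegral_add_measure, lintegral_map FA_measurable eA_measurable]
  simp only [FA_eA]
  rw [lintegral_zero]
  simpa using lintegral_FA_volume_lt_top

lemma infDist_Sn {k : ℕ} (q : E) (hq : q ∈ Sn (k+1)) :
    Metric.infDist q Acal ≤ (2:ℝ) ^ (-((k:ℤ)+1) + 1) := by
  have hmem : eA (q 0) ∈ Acal := mem_image_of_mem _ hq.1
  have hd : dist q (eA (q 0)) = |q 1| := by
    rw [eA_pt, dist_pt' q]
    simp [Real.sqrt_sq_eq_abs]
  have h1 : q 1 ≤ (2:ℝ) ^ (-((k+1:ℕ):ℤ)^2 + 1) := le_of_lt hq.2.2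
  have h2 : (2:ℝ) ^ (-((k+1:ℕ):ℤ)^2 + 1) ≤ (2:ℝ) ^ (-((k:ℤ)+1) + 1) := by
    apply zpow_le_zpow_right₀ (by norm_num : (1:ℝ) ≤ 2)
    push_cast
    nlinarith [Int.ofNat_nonneg k]
  have h3 : 0 < q 1 := lt_trans (by positivity) hq.2.1
  calc Metric.infDist q Acal ≤ dist q (eA (q 0)) := Metric.infDist_le_dist_of_mem hmem
    _ = q 1 := by rw [hd, abs_of_pos h3]
    _ ≤ _ := le_trans h1 h2

lemma FA_bound_near (p : E) (d : ℝ) (hd : 0 < d) (hdist : d ≤ Metric.infDist p Acal)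
    (N : ℕ) (hN : (2:ℝ) ^ (-(N:ℤ) + 1) < d / 2) :
    ∀ q ∈ ball p (d/2), FA q ≤ (2:ℝ≥0∞) ^ N := by
  intro q hq
  by_cases h : ∃ n : ℕ, q ∈ Sn (n+1)
  · obtain ⟨n, hn⟩ := h
    rw [FA_val q hn]
    have hinf : d / 2 < Metric.infDist q Acal := by
      have := Metric.infDist_le_infDist_add_dist (x := p) (y := q) (s := Acal)
      have hq' : dist p q < d / 2 := by rwa [dist_comm]; 
      linarith
    have h2 := infDist_Sn q hn
    -- so 2^{-(n+1)+1} > d/2 > 2^{-N+1}, hence -(n+1)+1 > -N+1, i.e. n+1 < N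
    have hlt : (2:ℝ) ^ (-(N:ℤ) + 1) < (2:ℝ) ^ (-((n:ℤ)+1) + 1) := by linarith
    have hexp : (-(N:ℤ) + 1) < (-((n:ℤ)+1) + 1) :=
      (zpow_lt_zpow_iff_right₀ (by norm_num : (1:ℝ) < 2)).mp hlt
    have hn1 : n + 1 ≤ N := by omega
    exact pow_le_pow_right₀ (by norm_num) hn1
  · push_neg at h
    rw [FA_zero q h]
    exact zero_le

end Aux18
namespace Aux18

lemma UB (p : E) (hp : p ∉ Acal) : noncenteredMaximal muA fA p < ⊤ := by
  set d := Metric.infDist p Acal with hdd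
  have hd0 : 0 < d := by
    rw [hdd, ← Acal_closed.notMem_iff_infDist_pos Acal_nonempty]
    exact hp
  obtain ⟨N, hN⟩ : ∃ N : ℕ, (2:ℝ) ^ (-(N:ℤ) + 1) < d / 2 := by
    obtain ⟨N, hN⟩ := exists_pow_lt_of_lt_one (by positivity : (0:ℝ) < d/4)
      (by norm_num : (1:ℝ)/2 < 1)
    refine ⟨N, ?_⟩
    have : (2:ℝ) ^ (-(N:ℤ) + 1) = 2 * ((1:ℝ)/2)^N := by
      rw [zpow_add₀ (by norm_num : (2:ℝ) ≠ 0), zpow_neg, ← inv_zpow, zpow_natCast]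
      norm_num [mul_comm]
    rw [this]
    linarith
  have hFb := FA_bound_near p d hd0 (le_of_eq hdd.symm) N hN
  have hvpos : (0:ℝ≥0∞) < volume (ball (0:E) (d/4)) := measure_ball_pos _ _ (by positivity)
  have hC := lintegral_FA_muA_lt_top
  set K : ℝ≥0∞ := max ((∫⁻ q, FA q ∂muA) / volume (ball (0:E) (d/4))) ((2:ℝ≥0∞)^N) with hK
  have hle : noncenteredMaximal muA fA p ≤ K := by
    unfold noncenteredMaximal
    refine iSup_le fun c => iSup_le fun r => iSup_le fun hr => iSup_le fun hmem => ?_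
    have hint : (∫⁻ y in ball c r, ENNReal.ofReal |fA y| ∂muA)
        = ∫⁻ y in ball c r, FA y ∂muA := lintegral_congr fun y => ofReal_abs_fA y
    rw [hint]
    rcases le_or_gt r (d/4) with hcase | hcase
    · -- small ball: ball c r ⊆ ball p (d/2), FA ≤ 2^N there
      have hsub : ball c r ⊆ ball p (d/2) := by
        intro q hq
        rw [mem_ball] at *
        have h1 : dist q p ≤ dist q c + dist c p := dist_triangle _ _ _
        have h2 : dist c p < r := by rwa [dist_comm]
        linarith
      have hb : (∫⁻ y in ball c r, FA y ∂muA) ≤ (2:ℝ≥0∞)^N * muA (ball c r) := by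
        calc (∫⁻ y in ball c r, FA y ∂muA)
            ≤ ∫⁻ _ in ball c r, (2:ℝ≥0∞)^N ∂muA :=
              setLIntegral_mono measurable_const (fun q hq => hFb q (hsub hq))
          _ = (2:ℝ≥0∞)^N * muA (ball c r) := setLIntegral_const _ _
      refine le_trans (ENNReal.div_le_of_le_mul hb) (le_max_right _ _)
    · -- large ball
      refine le_trans ?_ (le_max_left _ _)
      apply ENNReal.div_le_div (setLIntegral_le_lintegral _ _)
      calc volume (ball (0:E) (d/4)) = volume (ball c (d/4)) :=
            (Measure.addHaar_ball_center volume c (d/4)).symm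
        _ ≤ volume (ball c r) := measure_mono (ball_subset_ball (le_of_lt hcase))
        _ ≤ muA (ball c r) := by unfold muA; exact Measure.le_add_left le_rfl (ν := volume) _  
  refine lt_of_le_of_lt hle ?_
  rw [hK]
  apply max_lt
  · exact ENNReal.div_lt_top hC.ne hvpos.ne'
  · exact ENNReal.pow_lt_top (by norm_num)

end Aux18

namespace Aux18

set_option maxHeartbeats 3000000 in
lemma LB_step (x₀ : ℝ) (hx : x₀ ∈ Icc (0:ℝ) 1) (m : ℕ) :
    (2:ℝ≥0∞)^(m+2) * ENNReal.ofReal (1/80) ≤ noncenteredMaximal muA fA (eA x₀) := by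
  set h : ℝ := (2:ℝ) ^ (-(((m+2):ℕ):ℤ)^2) with hh
  have h0 : 0 < h := by rw [hh]; positivity
  have h16 : h ≤ 1/16 := by
    rw [hh]
    calc (2:ℝ) ^ (-(((m+2):ℕ):ℤ)^2) ≤ (2:ℝ) ^ (-4 : ℤ) := by
          apply zpow_le_zpow_right₀ (by norm_num : (1:ℝ) ≤ 2)
          push_cast
          nlinarith [Int.ofNat_nonneg m]
      _ = 1/16 := by norm_num
  clear_value h
  have hsq : h^2 ≤ 1/256 := by nlinarith
  have hcube : 8 * h^3 ≤ h / 32 := by nlinarith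
  set r : ℝ := 4 * h with hr
  set ε : ℝ := 8 * h^3 with hε
  set c1 : ℝ := r - ε with hc1
  set c : E := pt x₀ c1 with hc
  have hrpos : 0 < r := by rw [hr]; positivity
  have hεpos : 0 < ε := by rw [hε]; positivity
  have hc1pos : 0 < c1 := by rw [hc1, hr, hε]; linarith
  have hc1lt : c1 < r := by rw [hc1]; linarith
  have hc1ge : 3 * h ≤ c1 := by rw [hc1, hr, hε]; linarith
  have hc1le : c1 ≤ 4*h := by rw [hc1, hr]; linarith
  have hc0' : c 0 = x₀ := rfl
  have hc1' : c 1 = c1 := rfl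
  clear_value r ε c1 c
  -- the point is in the ball
  have hmem : eA x₀ ∈ ball c r := by
    rw [mem_ball, eA_pt, hc, dist_pt]
    rw [show (x₀ - x₀)^2 + (0 - c1)^2 = c1^2 by ring, Real.sqrt_sq hc1pos.le]
    exact hc1lt
  -- the rectangle
  set a : ℝ := min x₀ (1 - h) with ha
  have ha0 : 0 ≤ a := le_min hx.1 (by linarith)
  have ha1 : a + h ≤ 1 := by
    have : a ≤ 1 - h := min_le_right _ _
    linarith
  have hax1 : x₀ - h ≤ a := le_min (by linarith) (by linarith [hx.2])
  have hax2 : a ≤ x₀ := min_le_left _ _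
  clear_value a
  set R : Set E := {q : E | q 0 ∈ Icc a (a + h) ∧ q 1 ∈ Ioo h (2*h)} with hR
  have h2h : (2:ℝ) ^ (-(((m+2):ℕ):ℤ)^2 + 1) = 2 * h := by
    rw [hh, zpow_add₀ (by norm_num : (2:ℝ) ≠ 0)]; ring
  have hRS : R ⊆ Sn (m+2) := by
    intro q hq
    refine ⟨⟨le_trans ha0 hq.1.1, le_trans hq.1.2 ha1⟩, ?_⟩
    rw [← hh, h2h]
    exact ⟨hq.2.1, hq.2.2⟩
  have hRB : R ⊆ ball c r := by
    intro q hq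
    rw [mem_ball, hc, dist_pt' q]
    rw [show r = Real.sqrt (r^2) from (Real.sqrt_sq hrpos.le).symm]
    apply Real.sqrt_lt_sqrt (by positivity)
    have e1 : a ≤ q 0 := hq.1.1
    have e2 : q 0 ≤ a + h := hq.1.2
    have e3 : h < q 1 := hq.2.1
    have e4 : q 1 < 2*h := hq.2.2
    have b1 : (q 0 - x₀)^2 ≤ h^2 := by nlinarith
    have b2 : (q 1 - c1)^2 ≤ 9*h^2 := by nlinarith
    rw [hr]; nlinarith
  -- lower bound for the numerator
  have hnum : (2:ℝ≥0∞)^(m+2) * (ENNReal.ofReal h * ENNReal.ofReal h)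
      ≤ ∫⁻ y in ball c r, FA y ∂muA := by
    have step1 : ∫⁻ y in ball c r, FA y ∂volume ≤ ∫⁻ y in ball c r, FA y ∂muA := by
      unfold muA
      rw [Measure.restrict_add, lintegral_add_measure]
      exact le_add_self
    have step2 : ∫⁻ y in R, FA y ∂volume ≤ ∫⁻ y in ball c r, FA y ∂volume :=
      lintegral_mono_set hRB
    have step3 : ∫⁻ _ in R, (2:ℝ≥0∞)^(m+2) ∂volume ≤ ∫⁻ y in R, FA y ∂volume := by
      apply setLIntegral_mono FA_measurable
      intro q hq
      have hqS : q ∈ Sn ((m+1)+1) := hRS hq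
      rw [FA_val q hqS]
    have step4 : ∫⁻ _ in R, (2:ℝ≥0∞)^(m+2) ∂volume = (2:ℝ≥0∞)^(m+2) * volume R :=
      setLIntegral_const _ _
    have hvolR : volume R = ENNReal.ofReal h * ENNReal.ofReal h := by
      rw [hR, volume_box _ _ measurableSet_Icc measurableSet_Ioo,
        Real.volume_Icc, Real.volume_Ioo]
      rw [show a + h - a = h by ring, show 2*h - h = h by ring]
    calc (2:ℝ≥0∞)^(m+2) * (ENNReal.ofReal h * ENNReal.ofReal h)
        = ∫⁻ _ in R, (2:ℝ≥0∞)^(m+2) ∂volume := by rw [step4, hvolR]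
      _ ≤ ∫⁻ y in R, FA y ∂volume := step3
      _ ≤ ∫⁻ y in ball c r, FA y ∂volume := step2
      _ ≤ _ := step1
  -- upper bound for the denominator
  have hden : muA (ball c r) ≤ ENNReal.ofReal (80 * h^2) := by
    have hmap : (Measure.map eA (volume.restrict (Set.Icc (0:ℝ) 1))) (ball c r)
        ≤ ENNReal.ofReal (16 * h^2) := by
      rw [Measure.map_apply eA_measurable measurableSet_ball]
      have hsub : eA ⁻¹' ball c r ⊆ Ioo (x₀ - 8*h^2) (x₀ + 8*h^2) := by
        intro x hxm
        simp only [mem_preimage, mem_ball] at hxm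
        rw [eA_pt, hc, dist_pt] at hxm
        have hsq2 : (x - x₀)^2 + (0 - c1)^2 < r^2 := (Real.sqrt_lt' hrpos).mp hxm
        have hb : (x - x₀)^2 < (8*h^2)^2 := by
          rw [hc1, hr, hε] at hsq2
          nlinarith
        have habs : |x - x₀| < 8*h^2 := abs_lt_of_sq_lt_sq hb (by positivity)
        have := abs_lt.mp habs
        exact ⟨by linarith [this.1], by linarith [this.2]⟩
      calc (volume.restrict (Set.Icc (0:ℝ) 1)) (eA ⁻¹' ball c r)
          ≤ volume (eA ⁻¹' ball c r) := Measure.restrict_le_self _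
        _ ≤ volume (Ioo (x₀ - 8*h^2) (x₀ + 8*h^2)) := measure_mono hsub
        _ = ENNReal.ofReal (16 * h^2) := by rw [Real.volume_Ioo]; ring_nf
    have hvol : volume (ball c r) ≤ ENNReal.ofReal (64 * h^2) := by
      have hsub : ball c r ⊆ {q : E | q 0 ∈ Ioo (x₀ - r) (x₀ + r) ∧ q 1 ∈ Ioo (c1 - r) (c1 + r)} := by
        intro q hq
        rw [mem_ball] at hq
        have d0 := lt_of_le_of_lt (coord_dist q c 0) hq
        have d1 := lt_of_le_of_lt (coord_dist q c 1) hq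
        rw [hc0', Real.dist_eq] at d0
        rw [hc1', Real.dist_eq] at d1
        have hd0 := abs_lt.mp d0
        have hd1 := abs_lt.mp d1
        exact ⟨⟨by linarith [hd0.1], by linarith [hd0.2]⟩,
          ⟨by linarith [hd1.1], by linarith [hd1.2]⟩⟩
      calc volume (ball c r) ≤ _ := measure_mono hsub
        _ = ENNReal.ofReal (2*r) * ENNReal.ofReal (2*r) := by
            rw [volume_box _ _ measurableSet_Ioo measurableSet_Ioo,
              Real.volume_Ioo, Real.volume_Ioo]
            ring_nf
        _ ≤ ENNReal.ofReal (64 * h^2) := by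
            rw [← ENNReal.ofReal_mul (by positivity), hr]
            apply ENNReal.ofReal_le_ofReal
            nlinarith
    calc muA (ball c r) = _ + volume (ball c r) := rfl
      _ ≤ ENNReal.ofReal (16 * h^2) + ENNReal.ofReal (64 * h^2) := add_le_add hmap hvol
      _ = ENNReal.ofReal (80 * h^2) := by
          rw [← ENNReal.ofReal_add (by positivity) (by positivity)]
          ring_nf
  -- combine
  have hratio : (2:ℝ≥0∞)^(m+2) * ENNReal.ofReal (1/80)
      ≤ (∫⁻ y in ball c r, FA y ∂muA) / muA (ball c r) := by
    have key : (2:ℝ≥0∞)^(m+2) * ENNReal.ofReal (1/80)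
        = ((2:ℝ≥0∞)^(m+2) * (ENNReal.ofReal h * ENNReal.ofReal h)) / ENNReal.ofReal (80 * h^2) := by
      rw [mul_div_assoc]
      congr 1
      rw [← ENNReal.ofReal_mul h0.le, ← ENNReal.ofReal_div_of_pos (by positivity)]
      congr 1
      field_simp
    rw [key]
    exact ENNReal.div_le_div hnum hden
  refine le_trans hratio ?_
  unfold noncenteredMaximal
  refine le_iSup_of_le c ?_
  refine le_iSup_of_le r ?_
  refine le_iSup_of_le hrpos ?_
  refine le_iSup_of_le hmem ?_
  rw [show (∫⁻ y in ball c r, ENNReal.ofReal |fA y| ∂muA) = ∫⁻ y in ball c r, FA y ∂muA from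
    lintegral_congr fun y => ofReal_abs_fA y]

end Aux18

namespace Aux18

lemma LB (x₀ : ℝ) (hx : x₀ ∈ Icc (0:ℝ) 1) :
    noncenteredMaximal muA fA (eA x₀) = ⊤ := by
  by_contra hne
  set Mv := noncenteredMaximal muA fA (eA x₀) with hM
  have h80 : (80:ℝ≥0∞) * Mv ≠ ⊤ := ENNReal.mul_ne_top (by norm_num) hne
  obtain ⟨n, hn⟩ := ENNReal.exists_nat_gt h80
  have hstep := LB_step x₀ hx n
  have hof : ENNReal.ofReal (1/80 : ℝ) = (80:ℝ≥0∞)⁻¹ := by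
    rw [ENNReal.ofReal_div_of_pos (by norm_num)]
    norm_num
  rw [hof] at hstep
  have h1 : (2:ℝ≥0∞)^(n+2) ≤ 80 * Mv := by
    calc (2:ℝ≥0∞)^(n+2) = 2^(n+2) * 80⁻¹ * 80 := by
          rw [mul_assoc, ENNReal.inv_mul_cancel (by norm_num) (by norm_num), mul_one]
      _ ≤ Mv * 80 := mul_le_mul_left hstep 80
      _ = 80 * Mv := mul_comm _ _
  have h2 : ((n:ℝ≥0∞)) < 2^(n+2) := by
    have hnat : n < 2^(n+2) :=
      lt_of_lt_of_le (Nat.lt_two_pow_self (n := n)) (Nat.pow_le_pow_right (by norm_num) (by omega))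
    calc ((n:ℝ≥0∞)) < ((2^(n+2) : ℕ) : ℝ≥0∞) := by exact_mod_cast hnat
      _ = 2^(n+2) := by push_cast; ring
  exact absurd (lt_of_lt_of_le (lt_trans hn h2) h1) (lt_irrefl _)

end Aux18


/-- On `ℝ²` with `μ = λ₁ + λ₂`, where `λ₁` is `1`-dimensional Lebesgue
measure on the segment `A = [0,1] × {0}` and `λ₂` is `2`-dimensional Lebesgue measure, the
function `f = Σ_{n≥1} 2^n χ_{S_n}` with `S_n = [0,1] × (2^{−n²}, 2^{−n²+1})` satisfies
`Mf(x₀,y₀) < ∞` for every `(x₀,y₀) ∉ A`; consequently `{x : Mf(x) = ∞} = A`. -/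
theorem maximal_finite_off_segment
    (e : ℝ → EuclideanSpace ℝ (Fin 2)) (he : e = fun x => (WithLp.toLp 2 ![x, 0] : EuclideanSpace ℝ (Fin 2)))
    (μ : Measure (EuclideanSpace ℝ (Fin 2)))
    (hμ : μ = Measure.map e (volume.restrict (Set.Icc (0:ℝ) 1)) + volume)
    (A : Set (EuclideanSpace ℝ (Fin 2))) (hA : A = e '' Set.Icc (0:ℝ) 1)
    (S : ℕ → Set (EuclideanSpace ℝ (Fin 2)))
    (hS : S = fun n : ℕ => {p : EuclideanSpace ℝ (Fin 2) | p 0 ∈ Set.Icc (0:ℝ) 1 ∧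
      p 1 ∈ Set.Ioo ((2:ℝ) ^ (-(n:ℤ)^2)) ((2:ℝ) ^ (-(n:ℤ)^2 + 1))})
    (f : EuclideanSpace ℝ (Fin 2) → ℝ)
    (hf : f = fun p => ∑' n : ℕ, Set.indicator (S (n+1)) (fun _ => (2:ℝ) ^ (n+1)) p) :
    (∀ p : EuclideanSpace ℝ (Fin 2), p ∉ A → noncenteredMaximal μ f p < ⊤) ∧
    {p | noncenteredMaximal μ f p = ⊤} = A := by
  subst hS hf hA hμ he
  have key1 : ∀ p, p ∉ Aux18.Acal → noncenteredMaximal Aux18.muA Aux18.fA p < ⊤ := Aux18.UB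
  have key2 : ∀ x₀ ∈ Set.Icc (0:ℝ) 1,
      noncenteredMaximal Aux18.muA Aux18.fA (Aux18.eA x₀) = ⊤ := Aux18.LB
  constructor
  · intro p hp
    exact key1 p hp
  · ext q
    simp only [Set.mem_setOf_eq]
    constructor
    · intro hq
      by_contra hqa
      exact absurd hq (key1 q hqa).ne
    · rintro ⟨x₀, hx₀, rfl⟩
      exact key2 x₀ hx₀
end
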